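/- arXiv:2006.07366 — 5 statements merged into one kernel-verified Lean document; each statement's English description precedes it below -/
import Mathlib

section
/- There exists a universal constant C > 0 such that for every n ≥ 1, every p ∈ [0,1], and every even integer d ≥ 2: if S and S' are independent Binomial(n,p) random variables and σ² = 2p(1−p), then E[(S − S')^d] ≤ (C·d)^{d/2} · ∑_{ℓ=1}^{d/2} (n choose ℓ) · ℓ^{d/2} · σ^{2ℓ}. -/
open MeasureTheory ProbabilityTheory Finset


noncomputable def sbB (p : ℝ) (n j : ℕ) : ℝ := (n.choose j : ℝ) * p ^ j * (1 - p) ^ (n - j)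

noncomputable def sbG (p : ℝ) (n d : ℕ) : ℝ :=
  ∑ j ∈ range (n + 1), ∑ k ∈ range (n + 1), ((j : ℝ) - k) ^ d * sbB p n j * sbB p n k

lemma sbB_nonneg {p : ℝ} (h0 : 0 ≤ p) (h1 : p ≤ 1) (n j : ℕ) : 0 ≤ sbB p n j := by
  have h2 : (0:ℝ) ≤ 1 - p := by linarith
  exact mul_nonneg (mul_nonneg (Nat.cast_nonneg _) (pow_nonneg h0 _)) (pow_nonneg h2 _)

lemma sbB_sum (p : ℝ) (n : ℕ) : ∑ j ∈ range (n + 1), sbB p n j = 1 := by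
  have h := add_pow p (1 - p) n
  simp only [add_sub_cancel, one_pow] at h
  rw [show (1:ℝ) = (p + (1-p))^n by rw [add_sub_cancel, one_pow], add_pow]
  exact Finset.sum_congr rfl fun j hj => by unfold sbB; ring

lemma sbB_succ (p : ℝ) (n j : ℕ) :
    sbB p (n + 1) j = (1 - p) * sbB p n j + p * (if j = 0 then 0 else sbB p n (j - 1)) := by
  rcases j with _ | j
  · simp [sbB, Nat.sub_zero, pow_succ]
    ring
  · simp only [Nat.succ_ne_zero, if_false, Nat.add_sub_cancel]
    unfold sbB
    rw [Nat.choose_succ_succ']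
    push_cast
    rcases le_or_gt (j+1) n with h | h
    · have h2 : n - j = (n - (j+1)) + 1 := by omega
      rw [h2]
      ring
    · rcases Nat.eq_or_lt_of_le h with h' | h'
      · obtain rfl : j = n := by omega
        have hc1 : j.choose (j+1) = 0 := Nat.choose_eq_zero_of_lt (by omega)
        simp [hc1, Nat.sub_self]
        ring
      · have hc1 : n.choose (j+1) = 0 := Nat.choose_eq_zero_of_lt (by omega)
        have hc2 : n.choose j = 0 := Nat.choose_eq_zero_of_lt (by omega)
        simp [hc1, hc2]

lemma sbB_top (p : ℝ) (n : ℕ) : sbB p n (n + 1) = 0 := by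
  simp [sbB, Nat.choose_eq_zero_of_lt (by omega : n < n + 1)]

lemma sb_sumA (p : ℝ) (n : ℕ) (φ : ℕ → ℝ) :
    ∑ j ∈ range (n + 2), φ j * sbB p (n + 1) j
      = (1 - p) * ∑ j ∈ range (n + 1), φ j * sbB p n j
        + p * ∑ j ∈ range (n + 1), φ (j + 1) * sbB p n j := by
  have : ∀ j ∈ range (n + 2), φ j * sbB p (n + 1) j
      = (1 - p) * (φ j * sbB p n j) + p * (φ j * (if j = 0 then 0 else sbB p n (j - 1))) := by
    intro j _
    rw [sbB_succ]
    ring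
  rw [Finset.sum_congr rfl this, Finset.sum_add_distrib, ← Finset.mul_sum, ← Finset.mul_sum]
  congr 1
  · rw [Finset.sum_range_succ, sbB_top]
    simp
  · congr 1
    rw [Finset.sum_range_succ' (fun j => φ j * (if j = 0 then 0 else sbB p n (j - 1))) (n+1)]
    simp

lemma sbG_zero (p : ℝ) (n : ℕ) : sbG p n 0 = 1 := by
  unfold sbG
  simp only [pow_zero, one_mul]
  rw [← Finset.sum_mul_sum, sbB_sum, one_mul]

lemma sbG_nonneg {p : ℝ} (h0 : 0 ≤ p) (h1 : p ≤ 1) {d : ℕ} (hd : Even d) (n : ℕ) :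
    0 ≤ sbG p n d := by
  apply Finset.sum_nonneg; intro j _
  apply Finset.sum_nonneg; intro k _
  exact mul_nonneg (mul_nonneg (hd.pow_nonneg _) (sbB_nonneg h0 h1 _ _)) (sbB_nonneg h0 h1 _ _)

lemma sb_double (p : ℝ) (n : ℕ) (F : ℝ → ℝ → ℝ) :
    ∑ j ∈ range (n + 2), ∑ k ∈ range (n + 2), F j k * sbB p (n+1) j * sbB p (n+1) k
      = ∑ j ∈ range (n + 1), ∑ k ∈ range (n + 1),
          ((1-p)^2 * F j k + p*(1-p) * (F j (k+1) + F (j+1) k) + p^2 * F (j+1) (k+1))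
            * sbB p n j * sbB p n k := by
  have h1 : ∑ j ∈ range (n + 2), ∑ k ∈ range (n + 2), F j k * sbB p (n+1) j * sbB p (n+1) k
      = ∑ j ∈ range (n + 2), (∑ k ∈ range (n + 2), F j k * sbB p (n+1) k) * sbB p (n+1) j := by
    refine Finset.sum_congr rfl fun j _ => ?_
    rw [Finset.sum_mul]
    exact Finset.sum_congr rfl fun k _ => by ring
  rw [h1, sb_sumA p n (fun j => ∑ k ∈ range (n+2), F j k * sbB p (n+1) k)]
  have h2 : ∀ (x : ℝ), ∑ k ∈ range (n + 2), F x k * sbB p (n+1) k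
      = (1-p) * ∑ k ∈ range (n+1), F x k * sbB p n k
        + p * ∑ k ∈ range (n+1), F x (k+1) * sbB p n k := by
    intro x
    have h := sb_sumA p n (fun k => F x k)
    push_cast at h ⊢
    exact h
  have h3 : ∀ j ∈ range (n+1),
      (∑ k ∈ range (n + 2), F j k * sbB p (n+1) k) * sbB p n j
      = ((1-p) * ∑ k ∈ range (n+1), F j k * sbB p n k
        + p * ∑ k ∈ range (n+1), F j (k+1) * sbB p n k) * sbB p n j := by
    intro j _; rw [h2]
  rw [Finset.sum_congr rfl h3]
  have h5 : ∑ j ∈ range (n+1), (fun j : ℕ => ∑ k ∈ range (n + 2), F (j:ℝ) k * sbB p (n+1) k) (j+1) * sbB p n j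
      = ∑ j ∈ range (n+1), ((1-p) * ∑ k ∈ range (n+1), F ((j:ℝ)+1) k * sbB p n k
        + p * ∑ k ∈ range (n+1), F ((j:ℝ)+1) (k+1) * sbB p n k) * sbB p n j := by
    refine Finset.sum_congr rfl fun j _ => ?_
    push_cast
    rw [h2]
  rw [h5, Finset.mul_sum, Finset.mul_sum, ← Finset.sum_add_distrib]
  refine Finset.sum_congr rfl fun j _ => ?_
  have hz : ∑ k ∈ range (n + 1),
      ((1-p)^2 * F j k + p*(1-p) * (F (j:ℝ) ((k:ℝ)+1) + F ((j:ℝ)+1) k) + p^2 * F ((j:ℝ)+1) ((k:ℝ)+1))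
        * sbB p n j * sbB p n k
      = (∑ k ∈ range (n+1), F j k * sbB p n k) * ((1-p)^2 * sbB p n j)
        + ((∑ k ∈ range (n+1), F (j:ℝ) ((k:ℝ)+1) * sbB p n k) * (p*(1-p) * sbB p n j)
        + ((∑ k ∈ range (n+1), F ((j:ℝ)+1) k * sbB p n k) * (p*(1-p) * sbB p n j)
        + (∑ k ∈ range (n+1), F ((j:ℝ)+1) ((k:ℝ)+1) * sbB p n k) * (p^2 * sbB p n j))) := by
    rw [Finset.sum_mul, Finset.sum_mul, Finset.sum_mul, Finset.sum_mul,
      ← Finset.sum_add_distrib, ← Finset.sum_add_distrib, ← Finset.sum_add_distrib]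
    exact Finset.sum_congr rfl fun k _ => by ring
  rw [hz]
  ring

lemma sbG_rec (p : ℝ) (n d : ℕ) :
    sbG p (n + 1) d = ((1 - p) ^ 2 + p ^ 2) * sbG p n d
      + p * (1 - p) * ∑ a ∈ range (d + 1),
          (1 + (-1 : ℝ) ^ (d - a)) * (d.choose a : ℝ) * sbG p n a := by
  have h0 := sb_double p n (fun x y => (x - y)^d)
  have hcast : sbG p (n+1) d = ∑ j ∈ range (n + 2), ∑ k ∈ range (n + 2),
      (fun x y : ℝ => (x - y)^d) j k * sbB p (n+1) j * sbB p (n+1) k := rfl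
  rw [hcast, h0]
  have hpt : ∀ x : ℝ, (x + 1)^d + (x - 1)^d
      = ∑ a ∈ range (d+1), (1 + (-1:ℝ)^(d-a)) * (d.choose a : ℝ) * x^a := by
    intro x
    rw [add_pow x 1 d, show x - 1 = x + (-1) by ring, add_pow x (-1) d,
      ← Finset.sum_add_distrib]
    exact Finset.sum_congr rfl fun a _ => by ring
  have hswap : ∑ j ∈ range (n+1), ∑ k ∈ range (n+1),
      ((((j:ℝ) - k) + 1)^d + (((j:ℝ) - k) - 1)^d) * sbB p n j * sbB p n k
      = ∑ a ∈ range (d + 1), (1 + (-1:ℝ)^(d-a)) * (d.choose a : ℝ) * sbG p n a := by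
    have step : ∀ j ∈ range (n+1), ∀ k ∈ range (n+1),
        ((((j:ℝ) - k) + 1)^d + (((j:ℝ) - k) - 1)^d) * sbB p n j * sbB p n k
        = ∑ a ∈ range (d+1), (1 + (-1:ℝ)^(d-a)) * (d.choose a : ℝ)
            * (((j:ℝ) - k)^a * sbB p n j * sbB p n k) := by
      intro j _ k _
      rw [hpt, Finset.sum_mul, Finset.sum_mul]
      exact Finset.sum_congr rfl fun a _ => by ring
    calc ∑ j ∈ range (n+1), ∑ k ∈ range (n+1),
        ((((j:ℝ) - k) + 1)^d + (((j:ℝ) - k) - 1)^d) * sbB p n j * sbB p n k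
        = ∑ j ∈ range (n+1), ∑ a ∈ range (d+1), ∑ k ∈ range (n+1),
            (1 + (-1:ℝ)^(d-a)) * (d.choose a : ℝ) * (((j:ℝ) - k)^a * sbB p n j * sbB p n k) := by
          refine Finset.sum_congr rfl fun j hj => ?_
          rw [← Finset.sum_comm]
          exact Finset.sum_congr rfl fun k hk => step j hj k hk
      _ = ∑ a ∈ range (d+1), ∑ j ∈ range (n+1), ∑ k ∈ range (n+1),
            (1 + (-1:ℝ)^(d-a)) * (d.choose a : ℝ) * (((j:ℝ) - k)^a * sbB p n j * sbB p n k) := by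
          rw [Finset.sum_comm]
      _ = ∑ a ∈ range (d + 1), (1 + (-1:ℝ)^(d-a)) * (d.choose a : ℝ) * sbG p n a := by
          refine Finset.sum_congr rfl fun a _ => ?_
          unfold sbG
          rw [Finset.mul_sum]
          refine Finset.sum_congr rfl fun j _ => ?_
          rw [Finset.mul_sum]
  rw [← hswap]
  unfold sbG
  rw [Finset.mul_sum, Finset.mul_sum, ← Finset.sum_add_distrib]
  refine Finset.sum_congr rfl fun j _ => ?_
  rw [Finset.mul_sum, Finset.mul_sum, ← Finset.sum_add_distrib]
  refine Finset.sum_congr rfl fun k _ => ?_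
  ring

lemma sbG_le {p : ℝ} (h0 : 0 ≤ p) (h1 : p ≤ 1) :
    ∀ n : ℕ, ∀ d : ℕ, 2 ≤ d → Even d →
      sbG p n d ≤ ∑ l ∈ Icc 1 (d / 2), (n.choose l : ℝ) * (l : ℝ) ^ d * (2 * p * (1 - p)) ^ l := by
  have hs0 : (0:ℝ) ≤ 2 * p * (1 - p) := by nlinarith
  set s : ℝ := 2 * p * (1 - p) with hs
  intro n
  induction n with
  | zero =>
    intro d hd2 hde
    have hG : sbG p 0 d = 0 := by
      unfold sbG
      simp [zero_pow (by omega : d ≠ 0)]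
    rw [hG]
    apply Finset.sum_nonneg
    intro l _
    have : (0:ℝ) ≤ (l:ℝ)^d := by positivity
    positivity
  | succ n IH =>
    intro d hd2 hde
    set t := d / 2 with htdef
    have ht1 : 1 ≤ t := by
      have := Nat.div_le_div_right (c := 2) hd2
      simpa using this
    have hd2t : d = 2 * t := by
      rcases hde with ⟨r, hr⟩; omega
    -- rewrite recursion, absorbing the a = d term
    have grec : sbG p (n+1) d = sbG p n d
        + p * (1 - p) * ∑ a ∈ range d, (1 + (-1:ℝ)^(d-a)) * (d.choose a : ℝ) * sbG p n a := by
      rw [sbG_rec, Finset.sum_range_succ, Nat.sub_self, Nat.choose_self]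
      push_cast
      ring
    rw [grec]
    -- bound each term of the sum
    have hVbound : ∀ a ∈ range d, (1 + (-1:ℝ)^(d-a)) * (d.choose a : ℝ) * sbG p n a
        ≤ (1 + (-1:ℝ)^(d-a)) * (d.choose a : ℝ) *
          ((if a = 0 then (1:ℝ) else 0) + ∑ m ∈ Icc 1 (t-1), (n.choose m : ℝ) * (m:ℝ)^a * s^m) := by
      intro a ha
      rcases Nat.even_or_odd a with hae | hao
      · -- even a
        have hc : (0:ℝ) ≤ 1 + (-1:ℝ)^(d-a) := by
          rcases Nat.even_or_odd (d - a) with he | ho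
          · rw [he.neg_one_pow]; norm_num
          · rw [ho.neg_one_pow]; norm_num
        apply mul_le_mul_of_nonneg_left _ (mul_nonneg hc (Nat.cast_nonneg _))
        rcases Nat.eq_zero_or_pos a with rfl | hapos
        · rw [sbG_zero]
          rw [if_pos rfl]
          have : (0:ℝ) ≤ ∑ m ∈ Icc 1 (t-1), (n.choose m : ℝ) * (m:ℝ)^0 * s^m := by
            apply Finset.sum_nonneg; intro m _; positivity
          linarith
        · have ha2 : 2 ≤ a := by
            rcases hae with ⟨r, hr⟩; omega
        -- IH for a
          have h := IH a ha2 hae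
          rw [if_neg (by omega)]
          have hsub : Icc 1 (a/2) ⊆ Icc 1 (t-1) := by
            apply Finset.Icc_subset_Icc_right
            have had : a ≤ d - 2 := by
              have : a < d := Finset.mem_range.mp ha
              rcases hae with ⟨r, hr⟩; omega
            omega
          calc sbG p n a ≤ ∑ l ∈ Icc 1 (a/2), (n.choose l : ℝ) * (l:ℝ)^a * s^l := h
            _ ≤ 0 + ∑ m ∈ Icc 1 (t-1), (n.choose m : ℝ) * (m:ℝ)^a * s^m := by
                rw [zero_add]
                apply Finset.sum_le_sum_of_subset_of_nonneg hsub
                intro m _ _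
                positivity
      · -- odd a: coefficient is zero
        have : d - a ≠ 0 ∧ Odd (d - a) := by
          constructor
          · have : a < d := Finset.mem_range.mp ha
            omega
          · rcases hde with ⟨r, hr⟩; rcases hao with ⟨q, hq⟩
            have : a < d := Finset.mem_range.mp ha
            exact ⟨r - q - 1, by omega⟩
        rw [this.2.neg_one_pow]
        norm_num
    have hps : 0 ≤ p * (1 - p) := by nlinarith
    have hsum1 : ∑ a ∈ range d, (1 + (-1:ℝ)^(d-a)) * (d.choose a : ℝ) * sbG p n a
        ≤ ∑ a ∈ range d, (1 + (-1:ℝ)^(d-a)) * (d.choose a : ℝ) *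
          ((if a = 0 then (1:ℝ) else 0) + ∑ m ∈ Icc 1 (t-1), (n.choose m : ℝ) * (m:ℝ)^a * s^m) :=
      Finset.sum_le_sum hVbound
    -- compute the bounding sum
    have hsplit : ∑ a ∈ range d, (1 + (-1:ℝ)^(d-a)) * (d.choose a : ℝ) *
          ((if a = 0 then (1:ℝ) else 0) + ∑ m ∈ Icc 1 (t-1), (n.choose m : ℝ) * (m:ℝ)^a * s^m)
        = 2 + ∑ m ∈ Icc 1 (t-1), (n.choose m : ℝ) * s^m *
            (∑ a ∈ range d, (1 + (-1:ℝ)^(d-a)) * (d.choose a : ℝ) * (m:ℝ)^a) := by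
      have e1 : ∀ a ∈ range d, (1 + (-1:ℝ)^(d-a)) * (d.choose a : ℝ) *
          ((if a = 0 then (1:ℝ) else 0) + ∑ m ∈ Icc 1 (t-1), (n.choose m : ℝ) * (m:ℝ)^a * s^m)
          = (1 + (-1:ℝ)^(d-a)) * (d.choose a : ℝ) * (if a = 0 then (1:ℝ) else 0)
            + ∑ m ∈ Icc 1 (t-1), (n.choose m : ℝ) * s^m *
              ((1 + (-1:ℝ)^(d-a)) * (d.choose a : ℝ) * (m:ℝ)^a) := by
        intro a _
        rw [mul_add, Finset.mul_sum]
        congr 1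
        exact Finset.sum_congr rfl fun m _ => by ring
      rw [Finset.sum_congr rfl e1, Finset.sum_add_distrib]
      congr 1
      · rw [Finset.sum_eq_single_of_mem 0 (Finset.mem_range.mpr (by omega))]
        · rw [if_pos rfl, Nat.sub_zero, hde.neg_one_pow, Nat.choose_zero_right]
          norm_num
        · intro a _ ha0
          rw [if_neg ha0, mul_zero]
      · rw [Finset.sum_comm]
        exact Finset.sum_congr rfl fun m _ => by rw [← Finset.mul_sum]
    -- per-m coefficient bound
    have hcoef : ∀ m : ℕ, ∑ a ∈ range d, (1 + (-1:ℝ)^(d-a)) * (d.choose a : ℝ) * (m:ℝ)^a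
        ≤ 2 * ((m:ℝ)+1)^d := by
      intro m
      have e2 : ((m:ℝ)+1)^d = ∑ a ∈ range (d+1), (m:ℝ)^a * (d.choose a : ℝ) := by
        rw [add_pow]
        exact Finset.sum_congr rfl fun a _ => by ring
      rw [e2, Finset.mul_sum]
      calc ∑ a ∈ range d, (1 + (-1:ℝ)^(d-a)) * (d.choose a : ℝ) * (m:ℝ)^a
          ≤ ∑ a ∈ range d, 2 * ((m:ℝ)^a * (d.choose a : ℝ)) := by
            apply Finset.sum_le_sum
            intro a _
            have hle : (1 + (-1:ℝ)^(d-a)) ≤ 2 := by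
              have : (-1:ℝ)^(d-a) ≤ 1 := by
                rcases Nat.even_or_odd (d-a) with he | ho
                · rw [he.neg_one_pow]
                · rw [ho.neg_one_pow]; norm_num
              linarith
            have hnn : (0:ℝ) ≤ (d.choose a : ℝ) * (m:ℝ)^a := by positivity
            nlinarith [pow_nonneg (Nat.cast_nonneg (α := ℝ) m) a,
              Nat.cast_nonneg (α := ℝ) (d.choose a),
              mul_le_mul_of_nonneg_right hle hnn]
        _ ≤ ∑ a ∈ range (d+1), 2 * ((m:ℝ)^a * (d.choose a : ℝ)) := by
            apply Finset.sum_le_sum_of_subset_of_nonneg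
            · exact Finset.range_subset_range.mpr (by omega)
            · intro a _ _; positivity
    set K : ℝ := ∑ m ∈ Icc 1 (t-1), (n.choose m : ℝ) * ((m:ℝ)+1)^d * s^m with hKdef
    have hX : ∑ m ∈ Icc 1 (t-1), (n.choose m : ℝ) * s^m *
            (∑ a ∈ range d, (1 + (-1:ℝ)^(d-a)) * (d.choose a : ℝ) * (m:ℝ)^a)
        ≤ 2 * K := by
      rw [hKdef, Finset.mul_sum]
      apply Finset.sum_le_sum
      intro m _
      calc (n.choose m : ℝ) * s^m * (∑ a ∈ range d, (1 + (-1:ℝ)^(d-a)) * (d.choose a : ℝ) * (m:ℝ)^a)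
          ≤ (n.choose m : ℝ) * s^m * (2 * ((m:ℝ)+1)^d) := by
            apply mul_le_mul_of_nonneg_left (hcoef m) (by positivity)
        _ = 2 * ((n.choose m : ℝ) * ((m:ℝ)+1)^d * s^m) := by ring
    have hK0 : 0 ≤ K := by
      rw [hKdef]
      apply Finset.sum_nonneg
      intro m _
      positivity
    have hSig : ∑ a ∈ range d, (1 + (-1:ℝ)^(d-a)) * (d.choose a : ℝ) * sbG p n a
        ≤ 2 + 2 * K := by
      refine hsum1.trans ?_
      rw [hsplit]
      linarith
    have hreidx : ∑ l ∈ Icc 1 t, (n.choose (l-1) : ℝ) * (l:ℝ)^d * s^l = s * (1 + K) := by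
      rw [← Finset.Ico_add_one_right_eq_Icc, Finset.sum_Ico_eq_sum_range, Nat.add_one_sub_one]
      have e : ∀ i ∈ range t, (n.choose (1+i-1) : ℝ) * ((1+i : ℕ):ℝ)^d * s^(1+i)
          = s * ((n.choose i : ℝ) * ((i:ℝ)+1)^d * s^i) := by
        intro i _
        have h9 : 1 + i - 1 = i := by omega
        rw [h9]
        push_cast
        ring
      rw [Finset.sum_congr rfl e, ← Finset.mul_sum]
      congr 1
      have htt : t = (t-1) + 1 := by omega
      rw [htt, Finset.sum_range_succ' (fun i => (n.choose i : ℝ) * ((i:ℝ)+1)^d * s^i) (t-1)]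
      rw [hKdef, ← Finset.Ico_add_one_right_eq_Icc, Finset.sum_Ico_eq_sum_range, Nat.add_one_sub_one]
      simp only [Nat.add_sub_cancel, Nat.choose_zero_right, Nat.cast_zero, Nat.cast_one, zero_add,
        pow_zero, one_pow, mul_one, one_mul]
      rw [add_comm]
      congr 1
      refine Finset.sum_congr rfl fun i _ => ?_
      rw [add_comm 1 i]
    have hRHS : ∑ l ∈ Icc 1 t, (((n+1).choose l : ℕ) : ℝ) * (l:ℝ)^d * s^l
        = (∑ l ∈ Icc 1 t, (n.choose l : ℝ) * (l:ℝ)^d * s^l) + s * (1 + K) := by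
      have pascal : ∀ l ∈ Icc 1 t, (((n+1).choose l : ℕ) : ℝ) * (l:ℝ)^d * s^l
          = (n.choose l : ℝ) * (l:ℝ)^d * s^l + (n.choose (l-1) : ℝ) * (l:ℝ)^d * s^l := by
        intro l hl
        have h1 : 1 ≤ l := (Finset.mem_Icc.mp hl).1
        obtain ⟨l', rfl⟩ : ∃ l', l = l' + 1 := ⟨l-1, by omega⟩
        rw [Nat.choose_succ_succ]
        simp only [Nat.add_sub_cancel]
        push_cast
        ring
      rw [Finset.sum_congr rfl pascal, Finset.sum_add_distrib, hreidx]
    calc sbG p n d + p * (1 - p) * ∑ a ∈ range d, (1 + (-1:ℝ)^(d-a)) * (d.choose a : ℝ) * sbG p n a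
        ≤ (∑ l ∈ Icc 1 t, (n.choose l : ℝ) * (l:ℝ)^d * s^l) + p * (1-p) * (2 + 2*K) :=
          add_le_add (IH d hd2 hde) (mul_le_mul_of_nonneg_left hSig hps)
      _ = (∑ l ∈ Icc 1 t, (n.choose l : ℝ) * (l:ℝ)^d * s^l) + s * (1 + K) := by
          rw [hs]; ring
      _ = ∑ l ∈ Icc 1 t, (((n+1).choose l : ℕ) : ℝ) * (l:ℝ)^d * s^l := hRHS.symm


/-- Moments of symmetrized binomial distributions. -/
theorem symm_binomial_moments :
    ∃ C : ℝ, 0 < C ∧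
      ∀ (n : ℕ), 1 ≤ n → ∀ p : ℝ, 0 ≤ p → p ≤ 1 →
      ∀ (d : ℕ), 2 ≤ d → Even d →
      ∀ (Ω : Type) [MeasurableSpace Ω] (μ : Measure Ω) [IsProbabilityMeasure μ]
        (S S' : Ω → ℕ),
        IndepFun S S' μ →
        (∀ k : ℕ, μ {ω | S ω = k} =
          ENNReal.ofReal ((n.choose k : ℝ) * p ^ k * (1 - p) ^ (n - k))) →
        (∀ k : ℕ, μ {ω | S' ω = k} =
          ENNReal.ofReal ((n.choose k : ℝ) * p ^ k * (1 - p) ^ (n - k))) →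
        (∫ ω, ((S ω : ℝ) - (S' ω : ℝ)) ^ d ∂μ)
          ≤ (C * d) ^ (d / 2) *
            ∑ l ∈ Finset.Icc 1 (d / 2),
              (n.choose l : ℝ) * (l : ℝ) ^ (d / 2) * (2 * p * (1 - p)) ^ l := by
  refine ⟨1, one_pos, ?_⟩
  intro n hn p hp0 hp1 d hd2 hde Ω mΩ μ hμ S S' hind hS hS'
  have hs0 : (0:ℝ) ≤ 2 * p * (1 - p) := by nlinarith
  -- RHS is nonnegative
  have hRHS0 : 0 ≤ (1 * (d:ℝ)) ^ (d / 2) *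
      ∑ l ∈ Finset.Icc 1 (d / 2), (n.choose l : ℝ) * (l : ℝ) ^ (d / 2) * (2 * p * (1 - p)) ^ l := by
    apply mul_nonneg (by positivity)
    apply Finset.sum_nonneg
    intro l _
    positivity
  by_cases hf : Integrable (fun ω => ((S ω : ℝ) - (S' ω : ℝ)) ^ d) μ
  swap
  · rw [integral_undef hf]
    exact hRHS0
  -- a.s. S ≤ n and S' ≤ n
  have hnullS : μ {ω | n < S ω} = 0 := by
    have hsub : {ω | n < S ω} ⊆ ⋃ k : ℕ, {ω | S ω = (n+1) + k} := by
      intro ω hω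
      exact Set.mem_iUnion.mpr ⟨S ω - (n+1), by simp only [Set.mem_setOf_eq] at hω ⊢; omega⟩
    refine le_antisymm ?_ zero_le
    refine le_trans (measure_mono hsub) (le_trans (measure_iUnion_le _) ?_)
    have : ∀ k : ℕ, μ {ω | S ω = (n+1) + k} = 0 := by
      intro k
      rw [hS ((n+1)+k), Nat.choose_eq_zero_of_lt (by omega)]
      simp
    simp [this]
  have hnullS' : μ {ω | n < S' ω} = 0 := by
    have hsub : {ω | n < S' ω} ⊆ ⋃ k : ℕ, {ω | S' ω = (n+1) + k} := by
      intro ω hω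
      exact Set.mem_iUnion.mpr ⟨S' ω - (n+1), by simp only [Set.mem_setOf_eq] at hω ⊢; omega⟩
    refine le_antisymm ?_ zero_le
    refine le_trans (measure_mono hsub) (le_trans (measure_iUnion_le _) ?_)
    have : ∀ k : ℕ, μ {ω | S' ω = (n+1) + k} = 0 := by
      intro k
      rw [hS' ((n+1)+k), Nat.choose_eq_zero_of_lt (by omega)]
      simp
    simp [this]
  -- the dominating simple function
  set A : ℕ → ℕ → Set Ω := fun j k => {ω | S ω = j} ∩ {ω | S' ω = k} with hA
  set g : Ω → ℝ := fun ω => ∑ j ∈ Finset.range (n+1), ∑ k ∈ Finset.range (n+1),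
      Set.indicator (toMeasurable μ (A j k)) (fun _ => ((j:ℝ) - k)^d) ω with hg
  have hgint : Integrable g μ := by
    apply integrable_finset_sum
    intro j _
    apply integrable_finset_sum
    intro k _
    exact (integrable_const _).indicator (measurableSet_toMeasurable μ _)
  have hfg : ∀ᵐ ω ∂μ, ((S ω : ℝ) - (S' ω : ℝ)) ^ d ≤ g ω := by
    have h1 : ∀ᵐ ω ∂μ, ¬ (n < S ω) := by
      rw [ae_iff]
      simpa using hnullS
    have h2 : ∀ᵐ ω ∂μ, ¬ (n < S' ω) := by
      rw [ae_iff]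
      simpa using hnullS'
    filter_upwards [h1, h2] with ω hω1 hω2
    have hSn : S ω ∈ Finset.range (n+1) := Finset.mem_range.mpr (by omega)
    have hS'n : S' ω ∈ Finset.range (n+1) := Finset.mem_range.mpr (by omega)
    have hmem : ω ∈ toMeasurable μ (A (S ω) (S' ω)) :=
      subset_toMeasurable μ _ ⟨rfl, rfl⟩
    have hnn : ∀ j k : ℕ, (0:ℝ) ≤ Set.indicator (toMeasurable μ (A j k)) (fun _ => ((j:ℝ) - k)^d) ω := by
      intro j k
      apply Set.indicator_nonneg
      intro _ _
      exact hde.pow_nonneg _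
    calc ((S ω : ℝ) - (S' ω : ℝ)) ^ d
        = Set.indicator (toMeasurable μ (A (S ω) (S' ω)))
            (fun _ => ((S ω : ℝ) - (S' ω : ℝ))^d) ω := by
          rw [Set.indicator_of_mem hmem]
      _ ≤ ∑ k ∈ Finset.range (n+1),
            Set.indicator (toMeasurable μ (A (S ω) k)) (fun _ => ((S ω : ℝ) - (k:ℝ))^d) ω := by
          exact Finset.single_le_sum (fun k _ => hnn (S ω) k) hS'n
      _ ≤ g ω := by
          exact Finset.single_le_sum
            (f := fun j => ∑ k ∈ Finset.range (n+1),
              Set.indicator (toMeasurable μ (A j k)) (fun _ => ((j:ℝ) - k)^d) ω)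
            (fun j _ => Finset.sum_nonneg fun k _ => hnn j k) hSn
  have hint_le : ∫ ω, ((S ω : ℝ) - (S' ω : ℝ)) ^ d ∂μ ≤ ∫ ω, g ω ∂μ :=
    integral_mono_ae hf hgint hfg
  -- compute ∫ g
  have hmeas : ∀ j k : ℕ, μ (A j k)
      = ENNReal.ofReal (sbB p n j) * ENNReal.ofReal (sbB p n k) := by
    intro j k
    have : A j k = S ⁻¹' {j} ∩ S' ⁻¹' {k} := rfl
    rw [this, hind.measure_inter_preimage_eq_mul {j} {k} (measurableSet_singleton j)
      (measurableSet_singleton k)]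
    have e1 : S ⁻¹' {j} = {ω | S ω = j} := rfl
    have e2 : S' ⁻¹' {k} = {ω | S' ω = k} := rfl
    rw [e1, e2, hS j, hS' k]
    rfl
  have hgval : ∫ ω, g ω ∂μ = sbG p n d := by
    rw [hg]
    rw [integral_finset_sum _ (fun j _ => integrable_finset_sum _
      (fun k _ => (integrable_const _).indicator (measurableSet_toMeasurable μ _)))]
    unfold sbG
    refine Finset.sum_congr rfl fun j hj => ?_
    rw [integral_finset_sum _ (fun k _ => (integrable_const _).indicator
      (measurableSet_toMeasurable μ _))]
    refine Finset.sum_congr rfl fun k hk => ?_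
    rw [integral_indicator_const _ (measurableSet_toMeasurable μ _),
      measureReal_def, measure_toMeasurable, hmeas j k]
    rw [ENNReal.toReal_mul, ENNReal.toReal_ofReal (sbB_nonneg hp0 hp1 n j),
      ENNReal.toReal_ofReal (sbB_nonneg hp0 hp1 n k)]
    simp only [smul_eq_mul]
    ring
  -- final comparison
  have hpow : sbG p n d ≤ (1 * (d:ℝ)) ^ (d / 2) *
      ∑ l ∈ Finset.Icc 1 (d / 2), (n.choose l : ℝ) * (l : ℝ) ^ (d / 2) * (2 * p * (1 - p)) ^ l := by
    refine le_trans (sbG_le hp0 hp1 n d hd2 hde) ?_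
    rw [one_mul, Finset.mul_sum]
    apply Finset.sum_le_sum
    intro l hl
    have hl1 : 1 ≤ l := (Finset.mem_Icc.mp hl).1
    have hl2 : l ≤ d / 2 := (Finset.mem_Icc.mp hl).2
    have hld : (l:ℝ) ≤ (d:ℝ) := by
      have : l ≤ d := le_trans hl2 (Nat.div_le_self d 2)
      exact_mod_cast this
    have hdd : d = d / 2 + d / 2 := by
      rcases hde with ⟨r, hr⟩; omega
    have hpowl : (l:ℝ)^d ≤ (d:ℝ)^(d/2) * (l:ℝ)^(d/2) := by
      calc (l:ℝ)^d = (l:ℝ)^(d/2) * (l:ℝ)^(d/2) := by rw [← pow_add, ← hdd]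
        _ ≤ (d:ℝ)^(d/2) * (l:ℝ)^(d/2) := by
            apply mul_le_mul_of_nonneg_right _ (by positivity)
            exact pow_le_pow_left₀ (by positivity) hld _
    calc (n.choose l : ℝ) * (l:ℝ)^d * (2*p*(1-p))^l
        ≤ (n.choose l : ℝ) * ((d:ℝ)^(d/2) * (l:ℝ)^(d/2)) * (2*p*(1-p))^l := by
          apply mul_le_mul_of_nonneg_right _ (by positivity)
          exact mul_le_mul_of_nonneg_left hpowl (by positivity)
      _ = (d:ℝ)^(d/2) * ((n.choose l : ℝ) * (l:ℝ)^(d/2) * (2*p*(1-p))^l) := by ring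
  calc ∫ ω, ((S ω : ℝ) - (S' ω : ℝ)) ^ d ∂μ ≤ ∫ ω, g ω ∂μ := hint_le
    _ = sbG p n d := hgval
    _ ≤ _ := hpow
end

section
/- The family of random variables (S_x² − S_x)_{x ∈ α} is negatively associated: for every pair of disjoint subsets I, J ⊆ α and every pair of bounded functions f : (I → ℝ) → ℝ and g : (J → ℝ) → ℝ that are nondecreasing in each coordinate, E[ f((S_x² − S_x)_{x ∈ I}) · g((S_x² − S_x)_{x ∈ J}) ] ≤ E[ f((S_x² − S_x)_{x ∈ I}) ] · E[ g((S_x² − S_x)_{x ∈ J}) ]. -/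
open MeasureTheory ProbabilityTheory Finset

/-- The bin count `S_x`: number of sample points equal to `x`. -/
def binCount {α : Type} [DecidableEq α] (n : ℕ) (x : α) (ω : Fin n → α) : ℕ :=
  (Finset.univ.filter fun i => ω i = x).card


section NA

variable {ι Ω : Type} [Fintype ι] [Fintype Ω]

/-- Negative association for a finite family of functions on a finite weighted space. -/
def NegAssoc (w : Ω → ℝ) (X : ι → Ω → ℝ) : Prop :=
  ∀ I J : Finset ι, Disjoint I J →
  ∀ f g : (ι → ℝ) → ℝ, Monotone f → Monotone g →
  (∀ v v' : ι → ℝ, (∀ i ∈ I, v i = v' i) → f v = f v') →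
  (∀ v v' : ι → ℝ, (∀ i ∈ J, v i = v' i) → g v = g v') →
  ∑ ω, w ω * (f (fun i => X i ω) * g (fun i => X i ω)) ≤
    (∑ ω, w ω * f (fun i => X i ω)) * (∑ ω, w ω * g (fun i => X i ω))

lemma negAssoc_of_isEmpty [IsEmpty ι] (w : Ω → ℝ) (hw1 : ∑ ω, w ω = 1)
    (X : ι → Ω → ℝ) : NegAssoc w X := by
  intro I J hIJ f g hf hg hfd hgd
  haveI : Subsingleton (ι → ℝ) := ⟨fun a b => funext fun i => isEmptyElim i⟩
  obtain ⟨ω₀⟩ : Nonempty Ω := by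
    by_contra h
    rw [not_nonempty_iff] at h
    simp at hw1
  have hv : ∀ ω : Ω, (fun i => X i ω) = (fun i => X i ω₀) := fun ω => Subsingleton.elim _ _
  simp only [hv]
  rw [← Finset.sum_mul, ← Finset.sum_mul, ← Finset.sum_mul, hw1]
  exact le_of_eq (by ring)

/-- The zero–one lemma for one trial: the indicator family `(1[a = x])_x` on a finite
probability space is negatively associated. -/
lemma negAssoc_single {α : Type} [Fintype α] [DecidableEq α]
    (p : α → ℝ) (hp0 : ∀ x, 0 ≤ p x) (hp1 : ∑ x, p x = 1) :
    NegAssoc p (fun x a => if a = x then (1 : ℝ) else 0) := by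
  intro I J hIJ f g hf hg hfd hgd
  set e : α → α → ℝ := fun a x => if a = x then (1 : ℝ) else 0 with he
  set c := f 0 with hc
  set d := g 0 with hd
  have he0 : ∀ a, (0 : α → ℝ) ≤ e a := by
    intro a x
    simp only [e, Pi.zero_apply]
    positivity
  have hFc : ∀ a, c ≤ f (e a) := fun a => hf (he0 a)
  have hGd : ∀ a, d ≤ g (e a) := fun a => hg (he0 a)
  -- pointwise identity
  have key : ∀ a, f (e a) * g (e a) = d * f (e a) + c * g (e a) - c * d := by
    intro a
    by_cases haI : a ∈ I
    · have : g (e a) = d := by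
        refine (hgd (e a) 0 ?_)
        intro j hj
        have : a ≠ j := fun h => (Finset.disjoint_left.1 hIJ) haI (h ▸ hj)
        simp [e, this]
      rw [this]; ring
    · have : f (e a) = c := by
        refine (hfd (e a) 0 ?_)
        intro i hi
        have : a ≠ i := fun h => haI (h ▸ hi)
        simp [e, this]
      rw [this]; ring
  have hsum : ∑ a, p a * (f (e a) * g (e a)) =
      d * (∑ a, p a * f (e a)) + c * (∑ a, p a * g (e a)) - c * d := by
    rw [Finset.mul_sum, Finset.mul_sum, ← Finset.sum_add_distrib]
    have : (c * d : ℝ) = ∑ a, c * d * p a := by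
      rw [← Finset.mul_sum, hp1, mul_one]
    rw [this, ← Finset.sum_sub_distrib]
    refine Finset.sum_congr rfl fun a _ => ?_
    rw [key a]; ring
  have hEF : c ≤ ∑ a, p a * f (e a) := by
    calc c = ∑ a, p a * c := by rw [← Finset.sum_mul, hp1, one_mul]
    _ ≤ ∑ a, p a * f (e a) :=
      Finset.sum_le_sum fun a _ => mul_le_mul_of_nonneg_left (hFc a) (hp0 a)
  have hEG : d ≤ ∑ a, p a * g (e a) := by
    calc d = ∑ a, p a * d := by rw [← Finset.sum_mul, hp1, one_mul]
    _ ≤ ∑ a, p a * g (e a) :=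
      Finset.sum_le_sum fun a _ => mul_le_mul_of_nonneg_left (hGd a) (hp0 a)
  rw [hsum]
  nlinarith [mul_nonneg (sub_nonneg.2 hEF) (sub_nonneg.2 hEG)]

/-- Closure of negative association under independent products. -/
lemma NegAssoc.prod {ι₁ ι₂ Ω₁ Ω₂ : Type} [Fintype ι₁] [Fintype ι₂]
    [Fintype Ω₁] [Fintype Ω₂] [DecidableEq ι₁] [DecidableEq ι₂]
    {w₁ : Ω₁ → ℝ} {w₂ : Ω₂ → ℝ} {X₁ : ι₁ → Ω₁ → ℝ} {X₂ : ι₂ → Ω₂ → ℝ}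
    (hw₁0 : ∀ a, 0 ≤ w₁ a) (hw₂0 : ∀ b, 0 ≤ w₂ b)
    (h₁ : NegAssoc w₁ X₁) (h₂ : NegAssoc w₂ X₂) :
    NegAssoc (fun ω : Ω₁ × Ω₂ => w₁ ω.1 * w₂ ω.2)
      (fun i ω => Sum.elim (fun i₁ => X₁ i₁ ω.1) (fun i₂ => X₂ i₂ ω.2) i) := by
  intro I J hIJ f g hf hg hfd hgd
  set I₁ : Finset ι₁ := I.preimage Sum.inl (Sum.inl_injective.injOn) with hI₁
  set I₂ : Finset ι₂ := I.preimage Sum.inr (Sum.inr_injective.injOn) with hI₂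
  set J₁ : Finset ι₁ := J.preimage Sum.inl (Sum.inl_injective.injOn) with hJ₁
  set J₂ : Finset ι₂ := J.preimage Sum.inr (Sum.inr_injective.injOn) with hJ₂
  have hIJ₁ : Disjoint I₁ J₁ := by
    rw [Finset.disjoint_left]
    intro i hi hj
    rw [hI₁, Finset.mem_preimage] at hi
    rw [hJ₁, Finset.mem_preimage] at hj
    exact (Finset.disjoint_left.1 hIJ) hi hj
  have hIJ₂ : Disjoint I₂ J₂ := by
    rw [Finset.disjoint_left]
    intro i hi hj
    rw [hI₂, Finset.mem_preimage] at hi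
    rw [hJ₂, Finset.mem_preimage] at hj
    exact (Finset.disjoint_left.1 hIJ) hi hj
  -- combined vector
  set V : Ω₁ → Ω₂ → ι₁ ⊕ ι₂ → ℝ :=
    fun a b => Sum.elim (fun i₁ => X₁ i₁ a) (fun i₂ => X₂ i₂ b) with hV
  -- step 1: conditional on the first coordinate
  have step1 : ∀ a : Ω₁,
      ∑ b, w₂ b * (f (V a b) * g (V a b)) ≤
        (∑ b, w₂ b * f (V a b)) * (∑ b, w₂ b * g (V a b)) := by
    intro a
    have := h₂ I₂ J₂ hIJ₂
      (fun v => f (Sum.elim (fun i₁ => X₁ i₁ a) v))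
      (fun v => g (Sum.elim (fun i₁ => X₁ i₁ a) v))
      (fun v v' hvv => hf (by intro i; cases i with
        | inl i₁ => exact le_refl _
        | inr i₂ => exact hvv i₂))
      (fun v v' hvv => hg (by intro i; cases i with
        | inl i₁ => exact le_refl _
        | inr i₂ => exact hvv i₂))
      (fun v v' hvv => hfd _ _ (by
        intro i hi
        cases i with
        | inl i₁ => rfl
        | inr i₂ => exact hvv i₂ (by rw [hI₂, Finset.mem_preimage]; exact hi)))
      (fun v v' hvv => hgd _ _ (by
        intro i hi
        cases i with
        | inl i₁ => rfl
        | inr i₂ => exact hvv i₂ (by rw [hJ₂, Finset.mem_preimage]; exact hi)))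
    convert this using 4 <;> rfl
  -- the conditional expectations as functions of the first-block values
  set F1 : (ι₁ → ℝ) → ℝ := fun v => ∑ b, w₂ b * f (Sum.elim v (fun i₂ => X₂ i₂ b)) with hF1
  set G1 : (ι₁ → ℝ) → ℝ := fun v => ∑ b, w₂ b * g (Sum.elim v (fun i₂ => X₂ i₂ b)) with hG1
  have hF1eq : ∀ a, F1 (fun i₁ => X₁ i₁ a) = ∑ b, w₂ b * f (V a b) := by
    intro a; rfl
  have hG1eq : ∀ a, G1 (fun i₁ => X₁ i₁ a) = ∑ b, w₂ b * g (V a b) := by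
    intro a; rfl
  have step2 := h₁ I₁ J₁ hIJ₁ F1 G1
    (by
      intro v v' hvv
      refine Finset.sum_le_sum fun b _ => mul_le_mul_of_nonneg_left ?_ (hw₂0 b)
      refine hf ?_
      intro i; cases i with
      | inl i₁ => exact hvv i₁
      | inr i₂ => exact le_refl _)
    (by
      intro v v' hvv
      refine Finset.sum_le_sum fun b _ => mul_le_mul_of_nonneg_left ?_ (hw₂0 b)
      refine hg ?_
      intro i; cases i with
      | inl i₁ => exact hvv i₁
      | inr i₂ => exact le_refl _)
    (by
      intro v v' hvv
      refine Finset.sum_congr rfl fun b _ => ?_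
      congr 1
      refine hfd _ _ ?_
      intro i hi
      cases i with
      | inl i₁ => exact hvv i₁ (by rw [hI₁, Finset.mem_preimage]; exact hi)
      | inr i₂ => rfl)
    (by
      intro v v' hvv
      refine Finset.sum_congr rfl fun b _ => ?_
      congr 1
      refine hgd _ _ ?_
      intro i hi
      cases i with
      | inl i₁ => exact hvv i₁ (by rw [hJ₁, Finset.mem_preimage]; exact hi)
      | inr i₂ => rfl)
  have hVeq : ∀ (a : Ω₁) (b : Ω₂),
      (fun i => Sum.elim (fun i₁ => X₁ i₁ (a, b).1) (fun i₂ => X₂ i₂ (a, b).2) i) = V a b := by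
    intro a b; rfl
  calc ∑ ω : Ω₁ × Ω₂, w₁ ω.1 * w₂ ω.2 *
        (f (fun i => Sum.elim (fun i₁ => X₁ i₁ ω.1) (fun i₂ => X₂ i₂ ω.2) i) *
          g (fun i => Sum.elim (fun i₁ => X₁ i₁ ω.1) (fun i₂ => X₂ i₂ ω.2) i))
      = ∑ a, w₁ a * ∑ b, w₂ b * (f (V a b) * g (V a b)) := by
        rw [Fintype.sum_prod_type]
        refine Finset.sum_congr rfl fun a _ => ?_
        rw [Finset.mul_sum]
        refine Finset.sum_congr rfl fun b _ => ?_
        rw [hVeq]; ring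
    _ ≤ ∑ a, w₁ a * (F1 (fun i₁ => X₁ i₁ a) * G1 (fun i₁ => X₁ i₁ a)) := by
        refine Finset.sum_le_sum fun a _ => mul_le_mul_of_nonneg_left ?_ (hw₁0 a)
        rw [hF1eq, hG1eq]
        exact step1 a
    _ ≤ (∑ a, w₁ a * F1 (fun i₁ => X₁ i₁ a)) * (∑ a, w₁ a * G1 (fun i₁ => X₁ i₁ a)) := step2
    _ = _ := by
        congr 1
        · rw [Fintype.sum_prod_type]
          refine Finset.sum_congr rfl fun a _ => ?_
          rw [hF1eq a, Finset.mul_sum]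
          refine Finset.sum_congr rfl fun b _ => ?_
          rw [hVeq]; ring
        · rw [Fintype.sum_prod_type]
          refine Finset.sum_congr rfl fun a _ => ?_
          rw [hG1eq a, Finset.mul_sum]
          refine Finset.sum_congr rfl fun b _ => ?_
          rw [hVeq]; ring

/-- Transport of negative association along bijections of the sample space and index set. -/
lemma NegAssoc.transport {ι' Ω' : Type} [Fintype ι'] [Fintype Ω']
    {w : Ω → ℝ} {X : ι → Ω → ℝ} (h : NegAssoc w X) (σ : Ω' ≃ Ω) (τ : ι' ≃ ι) :
    NegAssoc (fun ω' => w (σ ω')) (fun i' ω' => X (τ i') (σ ω')) := by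
  intro I J hIJ f g hf hg hfd hgd
  have key := h (I.map τ.toEmbedding) (J.map τ.toEmbedding)
    (by
      rw [Finset.disjoint_left] at hIJ ⊢
      intro i hi hj
      rw [Finset.mem_map] at hi hj
      obtain ⟨i', hi', rfl⟩ := hi
      obtain ⟨j', hj', hji⟩ := hj
      have : j' = i' := τ.injective hji
      exact hIJ hi' (this ▸ hj'))
    (fun v => f (fun i' => v (τ i'))) (fun v => g (fun i' => v (τ i')))
    (fun v v' hvv => hf fun i' => hvv (τ i'))
    (fun v v' hvv => hg fun i' => hvv (τ i'))
    (fun v v' hvv => hfd _ _ fun i' hi' =>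
      hvv (τ i') (Finset.mem_map_of_mem _ hi'))
    (fun v v' hvv => hgd _ _ fun i' hi' =>
      hvv (τ i') (Finset.mem_map_of_mem _ hi'))
  calc ∑ ω', w (σ ω') * (f (fun i' => X (τ i') (σ ω')) * g (fun i' => X (τ i') (σ ω')))
      = ∑ ω, w ω * (f (fun i' => X (τ i') ω) * g (fun i' => X (τ i') ω)) :=
        Fintype.sum_equiv σ _ _ (fun ω' => rfl)
    _ ≤ _ := by
        refine le_of_le_of_eq key ?_
        congr 1
        · exact (Fintype.sum_equiv σ _ _ (fun ω' => rfl)).symm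
        · exact (Fintype.sum_equiv σ _ _ (fun ω' => rfl)).symm

/-- Closure of negative association under monotone functions of disjoint blocks. -/
lemma NegAssoc.comp {κ : Type} [Fintype κ] {w : Ω → ℝ} {X : ι → Ω → ℝ}
    (h : NegAssoc w X) (B : κ → Finset ι) (hB : Pairwise (Function.onFun Disjoint B))
    (Φ : κ → (ι → ℝ) → ℝ) (hΦm : ∀ k, Monotone (Φ k))
    (hΦd : ∀ (k) (v v' : ι → ℝ), (∀ i ∈ B k, v i = v' i) → Φ k v = Φ k v') :
    NegAssoc w (fun k ω => Φ k (fun i => X i ω)) := by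
  classical
  intro I J hIJ f g hf hg hfd hgd
  have hdisj : Disjoint (I.biUnion B) (J.biUnion B) := by
    rw [Finset.disjoint_left]
    intro i hi hj
    rw [Finset.mem_biUnion] at hi hj
    obtain ⟨k, hk, hik⟩ := hi
    obtain ⟨k', hk', hik'⟩ := hj
    rcases eq_or_ne k k' with rfl | hne
    · exact (Finset.disjoint_left.1 hIJ) hk hk'
    · exact Finset.disjoint_left.1 (hB hne) hik hik'
  exact h (I.biUnion B) (J.biUnion B) hdisj
    (fun v => f (fun k => Φ k v)) (fun v => g (fun k => Φ k v))
    (fun v v' hvv => hf fun k => hΦm k hvv)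
    (fun v v' hvv => hg fun k => hΦm k hvv)
    (fun v v' hvv => hfd _ _ fun k hk =>
      hΦd k _ _ fun i hi => hvv i (Finset.mem_biUnion.2 ⟨k, hk, hi⟩))
    (fun v v' hvv => hgd _ _ fun k hk =>
      hΦd k _ _ fun i hi => hvv i (Finset.mem_biUnion.2 ⟨k, hk, hi⟩))

end NA

section Multinomial

variable {α : Type} [Fintype α] [DecidableEq α]

/-- Product weights on `Fin n → α`. -/
def prodWeight (p : α → ℝ) (n : ℕ) : (Fin n → α) → ℝ := fun ω => ∏ i, p (ω i)

/-- Indicator family: `indFam n (i, x) ω = 1[ω i = x]`. -/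
def indFam (n : ℕ) : Fin n × α → (Fin n → α) → ℝ :=
  fun ix ω => if ω ix.1 = ix.2 then (1 : ℝ) else 0

lemma prodWeight_sum (p : α → ℝ) (hp1 : ∑ x, p x = 1) (n : ℕ) :
    ∑ ω, prodWeight p n ω = 1 := by
  induction n with
  | zero => simp [prodWeight]
  | succ n ih =>
      rw [← Equiv.sum_comp (Fin.consEquiv fun _ : Fin (n + 1) => α) (prodWeight p (n + 1)),
        Fintype.sum_prod_type]
      have hc : ∀ (a : α) (b : Fin n → α),
          prodWeight p (n + 1) ((Fin.consEquiv fun _ : Fin (n + 1) => α) (a, b)) =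
            p a * prodWeight p n b := by
        intro a b
        simp [prodWeight, Fin.prod_univ_succ]
      simp only [hc]
      calc ∑ a, ∑ b, p a * prodWeight p n b = ∑ a, p a * ∑ b, prodWeight p n b := by
            refine Finset.sum_congr rfl fun a _ => ?_
            rw [Finset.mul_sum]
        _ = 1 := by rw [ih]; simpa using hp1

/-- The equivalence `Fin (n+1) × α ≃ α ⊕ Fin n × α` splitting off the first trial. -/
def splitIdx (α : Type) (n : ℕ) : Fin (n + 1) × α ≃ α ⊕ Fin n × α where
  toFun ix := Fin.cases (Sum.inl ix.2) (fun j => Sum.inr (j, ix.2)) ix.1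
  invFun s := Sum.elim (fun x => (0, x)) (fun jx => (jx.1.succ, jx.2)) s
  left_inv := by
    rintro ⟨i, x⟩
    induction i using Fin.cases <;> simp
  right_inv := by
    rintro (x | ⟨j, x⟩) <;> simp

/-- The indicator family of the multinomial scheme is negatively associated. -/
lemma indFam_negAssoc (p : α → ℝ) (hp0 : ∀ x, 0 ≤ p x) (hp1 : ∑ x, p x = 1) (n : ℕ) :
    NegAssoc (prodWeight p n) (indFam (α := α) n) := by
  induction n with
  | zero => exact negAssoc_of_isEmpty _ (prodWeight_sum p hp1 0) _
  | succ n ih =>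
      have hw0 : ∀ b : Fin n → α, 0 ≤ prodWeight p n b :=
        fun b => Finset.prod_nonneg fun i _ => hp0 _
      have hprod := NegAssoc.prod hp0 hw0 (negAssoc_single p hp0 hp1) ih
      have htrans := hprod.transport (Fin.consEquiv fun _ : Fin (n + 1) => α).symm
        (splitIdx α n)
      have hweq : prodWeight p (n + 1) =
          fun ω : Fin (n + 1) → α => p (ω 0) * prodWeight p n (fun i => ω i.succ) := by
        funext ω
        simp [prodWeight, Fin.prod_univ_succ]
      have hXeq : indFam (α := α) (n + 1) =
          fun (i' : Fin (n + 1) × α) (ω' : Fin (n + 1) → α) =>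
            Sum.elim (fun (x : α) => if ω' 0 = x then (1 : ℝ) else 0)
              (fun i₂ : Fin n × α => indFam n i₂ (fun i => ω' i.succ))
              (splitIdx α n i') := by
        funext ix ω
        obtain ⟨i, x⟩ := ix
        induction i using Fin.cases with
        | zero => simp [splitIdx, indFam]
        | succ j => simp [splitIdx, indFam]
      rw [hweq, hXeq]
      exact htrans

/-- The monotone function `t ↦ t² - t` on the naturals, extended monotonically to `ℝ`. -/
noncomputable def phiFn (t : ℝ) : ℝ := if t ≤ 1 then 0 else t ^ 2 - t

lemma phiFn_monotone : Monotone phiFn := by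
  intro s t hst
  unfold phiFn
  by_cases hs : s ≤ 1
  · by_cases ht : t ≤ 1
    · simp [hs, ht]
    · simp only [hs, if_true, ht, if_false]
      push_neg at ht
      nlinarith
  · have ht : ¬ t ≤ 1 := fun h => hs (hst.trans h)
    simp only [hs, if_false, ht]
    push_neg at hs ht
    nlinarith

lemma phiFn_nat (N : ℕ) : phiFn (N : ℝ) = (N : ℝ) ^ 2 - N := by
  unfold phiFn
  match N with
  | 0 => norm_num
  | 1 => norm_num
  | (m + 2) =>
      have h2 : ¬ ((m + 2 : ℕ) : ℝ) ≤ 1 := by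
        push_neg
        push_cast
        nlinarith [Nat.cast_nonneg (α := ℝ) m]
      rw [if_neg h2]

lemma binCount_eq_sum (n : ℕ) (x : α) (ω : Fin n → α) :
    ((binCount n x ω : ℝ)) = ∑ i, indFam n (i, x) ω := by
  unfold binCount indFam
  rw [Finset.card_filter]
  push_cast
  rfl

/-- Negative association of the family `(S_x² - S_x)_x`. -/
lemma binContrib_negAssoc (p : α → ℝ) (hp0 : ∀ x, 0 ≤ p x) (hp1 : ∑ x, p x = 1) (n : ℕ) :
    NegAssoc (prodWeight p n)
      (fun (x : α) (ω : Fin n → α) => ((binCount n x ω : ℝ)) ^ 2 - (binCount n x ω : ℝ)) := by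
  have h := (indFam_negAssoc p hp0 hp1 n).comp
    (B := fun x : α => Finset.univ.map ⟨fun i : Fin n => (i, x), fun a b h => (Prod.ext_iff.1 h).1⟩)
    (hB := by
      intro x y hxy
      rw [Function.onFun, Finset.disjoint_left]
      intro ix hix hiy
      simp only [Finset.mem_map, Finset.mem_univ, Function.Embedding.coeFn_mk,
        true_and] at hix hiy
      obtain ⟨i, rfl⟩ := hix
      obtain ⟨j, hj⟩ := hiy
      have hyx : y = x := congrArg Prod.snd hj
      exact hxy hyx.symm)
    (Φ := fun x v => phiFn (∑ i : Fin n, v (i, x)))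
    (hΦm := fun x => phiFn_monotone.comp fun v v' hvv =>
      Finset.sum_le_sum fun i _ => hvv (i, x))
    (hΦd := by
      intro x v v' hvv
      refine congrArg phiFn (Finset.sum_congr rfl fun i _ => ?_)
      exact hvv (i, x) (by simp; exact ⟨i, rfl⟩))
  have heq : (fun (x : α) (ω : Fin n → α) =>
        phiFn (∑ i : Fin n, indFam n (i, x) ω)) =
      fun (x : α) (ω : Fin n → α) =>
        ((binCount n x ω : ℝ)) ^ 2 - (binCount n x ω : ℝ) := by
    funext x ω
    rw [← binCount_eq_sum, phiFn_nat]
  rw [← heq]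
  exact h

end Multinomial

section Integral

lemma integral_pi_eq_sum {α : Type} [Fintype α] [DecidableEq α] [MeasurableSpace α]
    [MeasurableSingletonClass α]
    (p : α → ℝ) (hp0 : ∀ x, 0 ≤ p x)
    (μ : Measure α) [IsProbabilityMeasure μ] (hμ : ∀ x, μ {x} = ENNReal.ofReal (p x))
    (n : ℕ) (h : (Fin n → α) → ℝ) :
    ∫ ω, h ω ∂(Measure.pi fun _ : Fin n => μ) = ∑ ω, prodWeight p n ω * h ω := by
  rw [integral_fintype (Integrable.of_finite)]
  refine Finset.sum_congr rfl fun ω _ => ?_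
  have hsingle : (Measure.pi fun _ : Fin n => μ) {ω} = ENNReal.ofReal (prodWeight p n ω) := by
    rw [← Set.univ_pi_singleton, Measure.pi_pi]
    simp only [hμ]
    rw [prodWeight, ENNReal.ofReal_prod_of_nonneg fun i _ => hp0 (ω i)]
  rw [measureReal_def, hsingle, ENNReal.toReal_ofReal
    (show (0 : ℝ) ≤ prodWeight p n ω from Finset.prod_nonneg fun i _ => hp0 (ω i))]
  rw [smul_eq_mul]

end Integral


/-- The family `(S_x² − S_x)_x` of bin contributions is negatively associated. -/
theorem bin_contributions_neg_associated
    (α : Type) [Fintype α] [DecidableEq α] [MeasurableSpace α] [MeasurableSingletonClass α]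
    (p : α → ℝ) (hp0 : ∀ x, 0 ≤ p x) (hp1 : ∑ x, p x = 1)
    (μ : Measure α) [IsProbabilityMeasure μ] (hμ : ∀ x, μ {x} = ENNReal.ofReal (p x))
    (n : ℕ)
    (I J : Finset α) (hIJ : Disjoint I J)
    (f : (↥I → ℝ) → ℝ) (g : (↥J → ℝ) → ℝ)
    (hf : Monotone f) (hg : Monotone g)
    (hfb : ∃ M : ℝ, ∀ v, |f v| ≤ M) (hgb : ∃ M : ℝ, ∀ v, |g v| ≤ M) :
    (∫ ω, f (fun x => ((binCount n (x : α) ω : ℝ)) ^ 2 - (binCount n (x : α) ω : ℝ)) *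
          g (fun x => ((binCount n (x : α) ω : ℝ)) ^ 2 - (binCount n (x : α) ω : ℝ))
        ∂(Measure.pi fun _ : Fin n => μ))
      ≤ (∫ ω, f (fun x => ((binCount n (x : α) ω : ℝ)) ^ 2 - (binCount n (x : α) ω : ℝ))
            ∂(Measure.pi fun _ : Fin n => μ)) *
        (∫ ω, g (fun x => ((binCount n (x : α) ω : ℝ)) ^ 2 - (binCount n (x : α) ω : ℝ))
            ∂(Measure.pi fun _ : Fin n => μ)) := by
  have hNA := binContrib_negAssoc p hp0 hp1 n
  have key := hNA I J hIJ
    (fun v : α → ℝ => f (fun x : ↥I => v x)) (fun v : α → ℝ => g (fun x : ↥J => v x))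
    (fun v v' hvv => hf fun x => hvv x)
    (fun v v' hvv => hg fun x => hvv x)
    (fun v v' hvv => congrArg f (funext fun x => hvv x x.2))
    (fun v v' hvv => congrArg g (funext fun x => hvv x x.2))
  rw [integral_pi_eq_sum p hp0 μ hμ n, integral_pi_eq_sum p hp0 μ hμ n,
    integral_pi_eq_sum p hp0 μ hμ n]
  exact key
end

section
/- There exists a universal constant C > 0 such that for every finite type α, every probability mass function p, and every integer n ≥ 2: (a) for each x ∈ α, Var[S_x² − S_x] ≤ C·((n·p(x))² + (n·p(x))³), and (b) the collision estimator satisfies Var[Q̃] ≤ C·( (∑_x p(x)²)/n² + (∑_x p(x)³)/n ). -/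
open MeasureTheory ProbabilityTheory Finset

/-- The collision estimator: fraction of colliding ordered pairs in the sample. -/
noncomputable def collEst {α : Type} [DecidableEq α] (n : ℕ) (ω : Fin n → α) : ℝ :=
  ((Finset.univ.filter fun ij : Fin n × Fin n => ij.1 ≠ ij.2 ∧ ω ij.1 = ω ij.2).card : ℝ) /
    ((n : ℝ) * ((n : ℝ) - 1))

set_option linter.unusedSectionVars false

namespace CollVar

variable {α : Type} [Fintype α] [DecidableEq α]

noncomputable def wgt (p : α → ℝ) (n : ℕ) (ω : Fin n → α) : ℝ := ∏ i, p (ω i)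

noncomputable def Ex (p : α → ℝ) (n : ℕ) (f : (Fin n → α) → ℝ) : ℝ :=
  ∑ ω : Fin n → α, wgt p n ω * f ω

lemma Ex_congr {p : α → ℝ} {n : ℕ} {f g : (Fin n → α) → ℝ} (h : ∀ ω, f ω = g ω) :
    Ex p n f = Ex p n g := by
  unfold Ex; exact Finset.sum_congr rfl fun ω _ => by rw [h ω]

lemma Ex_sum {p : α → ℝ} {n : ℕ} {ι : Type*} (s : Finset ι) (g : ι → (Fin n → α) → ℝ) :
    Ex p n (fun ω => ∑ e ∈ s, g e ω) = ∑ e ∈ s, Ex p n (g e) := by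
  unfold Ex
  simp_rw [Finset.mul_sum]
  exact Finset.sum_comm

lemma Ex_prod (p : α → ℝ) (n : ℕ) (g : Fin n → α → ℝ) :
    Ex p n (fun ω => ∏ i, g i (ω i)) = ∏ i, ∑ x, p x * g i x := by
  rw [Finset.prod_univ_sum, Fintype.piFinset_univ]
  unfold Ex wgt
  exact Finset.sum_congr rfl fun ω _ => by rw [← Finset.prod_mul_distrib]

lemma Ex_indic (p : α → ℝ) (hp1 : ∑ x, p x = 1) (n : ℕ) (s : Finset (Fin n)) (c : Fin n → α) :
    Ex p n (fun ω => ∏ i ∈ s, (if ω i = c i then (1:ℝ) else 0)) = ∏ i ∈ s, p (c i) := by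
  have h2 : ∀ ω : Fin n → α, (∏ i ∈ s, (if ω i = c i then (1:ℝ) else 0))
      = ∏ i, (fun i a => if i ∈ s then (if a = c i then (1:ℝ) else 0) else 1) i (ω i) := by
    intro ω
    rw [Finset.prod_congr rfl (fun i hi => by simp only [hi, if_true] :
      ∀ i ∈ s, (if ω i = c i then (1:ℝ) else 0)
        = (fun i => if i ∈ s then (if ω i = c i then (1:ℝ) else 0) else 1) i)]
    exact Finset.prod_subset (Finset.subset_univ s) (fun i _ hi => by simp [hi])
  rw [Ex_congr h2, Ex_prod p n (fun i a => if i ∈ s then (if a = c i then (1:ℝ) else 0) else 1)]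
  have h3 : ∀ i : Fin n, (∑ x, p x * (if i ∈ s then (if x = c i then (1:ℝ) else 0) else 1))
      = if i ∈ s then p (c i) else 1 := by
    intro i
    by_cases hi : i ∈ s
    · simp [hi, mul_ite]
    · simp [hi, ← Finset.sum_mul, hp1]
  simp_rw [h3]
  rw [← Finset.prod_subset (Finset.subset_univ s) (fun i _ hi => by simp [hi])]
  exact Finset.prod_congr rfl fun i hi => by simp [hi]

noncomputable def Y {α : Type} [DecidableEq α] (n : ℕ) (x : α) (e : Fin n × Fin n)
    (ω : Fin n → α) : ℝ :=
  (if ω e.1 = x then 1 else 0) * (if ω e.2 = x then 1 else 0)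

lemma Y_eq_prod {n : ℕ} {x : α} {e : Fin n × Fin n} (he : e.1 ≠ e.2) (ω : Fin n → α) :
    Y n x e ω = ∏ i ∈ ({e.1, e.2} : Finset (Fin n)), (if ω i = x then (1:ℝ) else 0) := by
  rw [Finset.prod_pair he]; rfl

lemma prod_indic_mul {n : ℕ} (s t : Finset (Fin n)) (f : Fin n → ℝ) (hf : ∀ i, f i * f i = f i) :
    (∏ i ∈ s, f i) * (∏ i ∈ t, f i) = ∏ i ∈ s ∪ t, f i := by
  have h1 : s ∩ t ⊆ s ∪ t := (Finset.inter_subset_left).trans Finset.subset_union_left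
  rw [← Finset.prod_union_inter, ← Finset.prod_sdiff h1, mul_assoc]
  congr 1
  rw [← Finset.prod_mul_distrib]
  exact Finset.prod_congr rfl fun i _ => hf i

lemma Ex_Y_mul_same (p : α → ℝ) (hp1 : ∑ x, p x = 1) {n : ℕ} (x : α) {e e' : Fin n × Fin n}
    (he : e.1 ≠ e.2) (he' : e'.1 ≠ e'.2) :
    Ex p n (fun ω => Y n x e ω * Y n x e' ω)
      = p x ^ (({e.1, e.2} ∪ {e'.1, e'.2} : Finset (Fin n)).card) := by
  have h : ∀ ω : Fin n → α, Y n x e ω * Y n x e' ω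
      = ∏ i ∈ ({e.1, e.2} ∪ {e'.1, e'.2} : Finset (Fin n)),
          (if ω i = (fun _ : Fin n => x) i then (1:ℝ) else 0) := by
    intro ω
    rw [Y_eq_prod he, Y_eq_prod he']
    exact prod_indic_mul _ _ _ fun i => by by_cases h : ω i = x <;> simp [h]
  rw [Ex_congr h, Ex_indic p hp1 n _ _, Finset.prod_const]

lemma Ex_Y (p : α → ℝ) (hp1 : ∑ x, p x = 1) {n : ℕ} (x : α) {e : Fin n × Fin n}
    (he : e.1 ≠ e.2) : Ex p n (Y n x e) = p x ^ 2 := by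
  have h : ∀ ω : Fin n → α, Y n x e ω
      = ∏ i ∈ ({e.1, e.2} : Finset (Fin n)), (if ω i = (fun _ : Fin n => x) i then (1:ℝ) else 0) :=
    fun ω => Y_eq_prod he ω
  rw [Ex_congr h, Ex_indic p hp1 n _ _, Finset.prod_const, Finset.card_pair he]

lemma Ex_Y_mul_disjoint (p : α → ℝ) (hp1 : ∑ x, p x = 1) {n : ℕ} (x y : α) {e e' : Fin n × Fin n}
    (he : e.1 ≠ e.2) (he' : e'.1 ≠ e'.2)
    (hd : Disjoint ({e.1, e.2} : Finset (Fin n)) {e'.1, e'.2}) :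
    Ex p n (fun ω => Y n x e ω * Y n y e' ω) = p x ^ 2 * p y ^ 2 := by
  set c : Fin n → α := fun i => if i ∈ ({e.1, e.2} : Finset (Fin n)) then x else y with hc
  have h : ∀ ω : Fin n → α, Y n x e ω * Y n y e' ω
      = ∏ i ∈ (({e.1, e.2} : Finset (Fin n)) ∪ {e'.1, e'.2}),
          (if ω i = c i then (1:ℝ) else 0) := by
    intro ω
    rw [Finset.prod_union hd, Y_eq_prod he, Y_eq_prod he']
    congr 1
    · exact Finset.prod_congr rfl fun i hi => by rw [show c i = x from if_pos hi]
    · refine Finset.prod_congr rfl fun i hi => ?_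
      have hni : i ∉ ({e.1, e.2} : Finset (Fin n)) := fun h' => (Finset.disjoint_left.1 hd) h' hi
      rw [show c i = y from if_neg hni]
  rw [Ex_congr h, Ex_indic p hp1 n _ _, Finset.prod_union hd]
  congr 1
  · rw [Finset.prod_congr rfl (fun i hi => by rw [show c i = x from if_pos hi] :
      ∀ i ∈ ({e.1, e.2} : Finset (Fin n)), p (c i) = p x),
      Finset.prod_const, Finset.card_pair he]
  · have hcy : ∀ i ∈ ({e'.1, e'.2} : Finset (Fin n)), p (c i) = p y := by
      intro i hi
      have hni : i ∉ ({e.1, e.2} : Finset (Fin n)) := fun h' => (Finset.disjoint_left.1 hd) h' hi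
      rw [show c i = y from if_neg hni]
    rw [Finset.prod_congr rfl hcy, Finset.prod_const, Finset.card_pair he']

lemma Y_mul_cross {n : ℕ} {x y : α} {e e' : Fin n × Fin n} (hxy : x ≠ y)
    (hnd : ¬ Disjoint ({e.1, e.2} : Finset (Fin n)) {e'.1, e'.2}) (ω : Fin n → α) :
    Y n x e ω * Y n y e' ω = 0 := by
  obtain ⟨m, hm1, hm2⟩ := Finset.not_disjoint_iff.1 hnd
  simp only [Finset.mem_insert, Finset.mem_singleton] at hm1 hm2
  by_cases hmx : ω m = x
  · have hmy : ω m ≠ y := fun h => hxy (hmx ▸ h ▸ rfl)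
    have : Y n y e' ω = 0 := by rcases hm2 with h | h <;> subst h <;> simp [Y, hmy]
    rw [this, mul_zero]
  · have : Y n x e ω = 0 := by rcases hm1 with h | h <;> subst h <;> simp [Y, hmx]
    rw [this, zero_mul]


lemma wgt_nonneg {p : α → ℝ} (hp0 : ∀ x, 0 ≤ p x) {n : ℕ} (ω : Fin n → α) : 0 ≤ wgt p n ω :=
  Finset.prod_nonneg fun i _ => hp0 _

lemma variance_eq_Ex [MeasurableSpace α] [MeasurableSingletonClass α]
    (p : α → ℝ) (hp0 : ∀ x, 0 ≤ p x)
    (μ : Measure α) [IsProbabilityMeasure μ] (hμ : ∀ x, μ {x} = ENNReal.ofReal (p x))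
    (n : ℕ) (f : (Fin n → α) → ℝ) :
    variance f (Measure.pi fun _ : Fin n => μ)
      = Ex p n (fun ω => f ω * f ω) - (Ex p n f) ^ 2 := by
  set P := Measure.pi fun _ : Fin n => μ with hP
  have hsing : ∀ ω : Fin n → α, (P {ω}).toReal = wgt p n ω := by
    intro ω
    have h1 : ({ω} : Set (Fin n → α)) = Set.pi Set.univ fun i => {ω i} :=
      (Set.univ_pi_singleton ω).symm
    rw [hP, h1, Measure.pi_pi, ENNReal.toReal_prod]
    exact Finset.prod_congr rfl fun i _ => by rw [hμ, ENNReal.toReal_ofReal (hp0 _)]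
  have key : ∀ g : (Fin n → α) → ℝ, ∫ ω, g ω ∂P = Ex p n g := by
    intro g
    rw [integral_fintype (Integrable.of_finite)]
    unfold Ex
    exact Finset.sum_congr rfl fun ω _ => by rw [measureReal_def, hsing, smul_eq_mul]
  rw [variance_eq_sub MemLp.of_discrete]
  have h2 : ∫ ω, (f ^ 2) ω ∂P = Ex p n (fun ω => f ω * f ω) := by
    rw [← key]
    exact integral_congr_ae (Filter.Eventually.of_forall fun ω => by simp [pow_two])
  rw [h2, key]

lemma binCount_identity (n : ℕ) (x : α) (ω : Fin n → α) :
    (binCount n x ω : ℝ) ^ 2 - (binCount n x ω : ℝ)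
      = ∑ e ∈ (Finset.univ : Finset (Fin n)).offDiag, Y n x e ω := by
  have hB : (binCount n x ω : ℝ) = ∑ i, (if ω i = x then (1:ℝ) else 0) := by
    unfold binCount
    rw [Finset.card_filter]
    push_cast
    exact Finset.sum_congr rfl fun i _ => by by_cases h : ω i = x <;> simp [h]
  rw [hB, pow_two, Finset.sum_mul_sum]
  have hsq : ∀ i, ((if ω i = x then (1:ℝ) else 0) * (if ω i = x then (1:ℝ) else 0))
      = (if ω i = x then (1:ℝ) else 0) := fun i => by by_cases h : ω i = x <;> simp [h]
  have hprod : (∑ i, ∑ j, (if ω i = x then (1:ℝ) else 0) * (if ω j = x then (1:ℝ) else 0))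
      = ∑ e ∈ (Finset.univ : Finset (Fin n)) ×ˢ Finset.univ, Y n x e ω := by
    rw [Finset.sum_product]
    rfl
  rw [hprod, ← Finset.diag_union_offDiag,
    Finset.sum_union (Finset.disjoint_diag_offDiag _), Finset.sum_diag]
  have : ∑ i, Y n x (i, i) ω = ∑ i, (if ω i = x then (1:ℝ) else 0) :=
    Finset.sum_congr rfl fun i _ => hsq i
  rw [this]
  ring

lemma Ex_zero (p : α → ℝ) (n : ℕ) : Ex p n (fun _ => (0:ℝ)) = 0 := by simp [Ex]

lemma sameSet_cases {n : ℕ} {e e' : Fin n × Fin n} (he' : e'.1 ≠ e'.2)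
    (h : ({e'.1, e'.2} : Finset (Fin n)) = {e.1, e.2}) : e' = e ∨ e' = (e.2, e.1) := by
  have h1 : e'.1 ∈ ({e.1, e.2} : Finset (Fin n)) := h ▸ Finset.mem_insert_self _ _
  have h2 : e'.2 ∈ ({e.1, e.2} : Finset (Fin n)) := h ▸ (by simp)
  simp only [Finset.mem_insert, Finset.mem_singleton] at h1 h2
  rcases h1 with h1 | h1
  · rcases h2 with h2 | h2
    · exact absurd (h1.trans h2.symm) he'
    · left; exact Prod.ext h1 h2
  · rcases h2 with h2 | h2
    · right; exact Prod.ext h1 h2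
    · exact absurd (h1.trans h2.symm) he'

lemma coll_card_identity (n : ℕ) (ω : Fin n → α) :
    ((Finset.univ.filter fun ij : Fin n × Fin n => ij.1 ≠ ij.2 ∧ ω ij.1 = ω ij.2).card : ℝ)
      = ∑ e ∈ (Finset.univ : Finset (Fin n)).offDiag, ∑ x : α, Y n x e ω := by
  have hfs : (Finset.univ.filter fun ij : Fin n × Fin n => ij.1 ≠ ij.2 ∧ ω ij.1 = ω ij.2)
      = ((Finset.univ : Finset (Fin n)).offDiag).filter fun ij => ω ij.1 = ω ij.2 := by
    ext ij
    simp [Finset.mem_offDiag, and_comm]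
  rw [hfs, Finset.card_filter]
  push_cast
  refine Finset.sum_congr rfl fun e he => ?_
  have hY : ∀ x : α, Y n x e ω = if ω e.1 = x ∧ ω e.2 = x then (1:ℝ) else 0 := by
    intro x
    unfold Y
    by_cases h1 : ω e.1 = x <;> by_cases h2 : ω e.2 = x <;> simp [h1, h2]
  simp_rw [hY]
  by_cases h : ω e.1 = ω e.2
  · have : ∀ x : α, (ω e.1 = x ∧ ω e.2 = x) ↔ (ω e.1 = x) := by
      intro x; constructor
      · exact fun hh => hh.1
      · exact fun hh => ⟨hh, h ▸ hh⟩
    simp_rw [this]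
    simp [h]
  · have : ∀ x : α, ¬(ω e.1 = x ∧ ω e.2 = x) := by
      intro x ⟨hx1, hx2⟩; exact h (hx1.trans hx2.symm)
    simp [h, this]

lemma var_sum [MeasurableSpace α] [MeasurableSingletonClass α]
    (p : α → ℝ) (hp0 : ∀ x, 0 ≤ p x)
    (μ : Measure α) [IsProbabilityMeasure μ] (hμ : ∀ x, μ {x} = ENNReal.ofReal (p x))
    (n : ℕ) (s : Finset (Fin n × Fin n)) (g : (Fin n × Fin n) → (Fin n → α) → ℝ) :
    variance (fun ω => ∑ e ∈ s, g e ω) (Measure.pi fun _ : Fin n => μ)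
      = ∑ e ∈ s, ∑ e' ∈ s,
          (Ex p n (fun ω => g e ω * g e' ω) - Ex p n (g e) * Ex p n (g e')) := by
  rw [variance_eq_Ex p hp0 μ hμ]
  have h1 : Ex p n (fun ω => (∑ e ∈ s, g e ω) * (∑ e ∈ s, g e ω))
      = ∑ e ∈ s, ∑ e' ∈ s, Ex p n (fun ω => g e ω * g e' ω) := by
    rw [Ex_congr (fun ω => Finset.sum_mul_sum s s (fun e => g e ω) (fun e => g e ω))]
    rw [Ex_sum s (fun e ω => ∑ e' ∈ s, g e ω * g e' ω)]
    exact Finset.sum_congr rfl fun e _ => Ex_sum s (fun e' ω => g e ω * g e' ω)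
  rw [h1, Ex_sum s g, pow_two, Finset.sum_mul_sum s s _ _, ← Finset.sum_sub_distrib]
  exact Finset.sum_congr rfl fun e _ => (Finset.sum_sub_distrib _ _).symm

lemma card_union_ge_three {n : ℕ} {e e' : Fin n × Fin n} (he : e.1 ≠ e.2) (he' : e'.1 ≠ e'.2)
    (hq : ({e'.1, e'.2} : Finset (Fin n)) ≠ {e.1, e.2}) :
    3 ≤ (({e.1, e.2} ∪ {e'.1, e'.2} : Finset (Fin n))).card := by
  have hsub : ({e.1, e.2} : Finset (Fin n)) ⊆ {e.1, e.2} ∪ {e'.1, e'.2} :=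
    Finset.subset_union_left
  have hne : ({e.1, e.2} : Finset (Fin n)) ≠ {e.1, e.2} ∪ {e'.1, e'.2} := by
    intro h
    have hsub' : ({e'.1, e'.2} : Finset (Fin n)) ⊆ {e.1, e.2} := by
      rw [h]; exact Finset.subset_union_right
    exact hq (Finset.eq_of_subset_of_card_le hsub'
      (by rw [Finset.card_pair he, Finset.card_pair he']))
  have : ({e.1, e.2} : Finset (Fin n)) ⊂ {e.1, e.2} ∪ {e'.1, e'.2} := ⟨hsub, by
    intro h
    exact hne (Finset.Subset.antisymm hsub h)⟩
  have := Finset.card_lt_card this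
  rw [Finset.card_pair he] at this
  omega

lemma inner_bound (p : α → ℝ) (hp0 : ∀ x, 0 ≤ p x) (hp1 : ∑ x, p x = 1)
    {n : ℕ} (x : α) (hx1 : p x ≤ 1) {e : Fin n × Fin n} (he : e.1 ≠ e.2) :
    ∑ e' ∈ (Finset.univ : Finset (Fin n)).offDiag,
        (Ex p n (fun ω => Y n x e ω * Y n x e' ω) - p x ^ 2 * p x ^ 2)
      ≤ 2 * p x ^ 2 + (4 * n) * p x ^ 3 := by
  classical
  set E := (Finset.univ : Finset (Fin n)).offDiag with hE
  set T : Fin n × Fin n → ℝ :=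
    fun e' => Ex p n (fun ω => Y n x e ω * Y n x e' ω) - p x ^ 2 * p x ^ 2 with hT
  have hp2 : (0:ℝ) ≤ p x ^ 2 := pow_nonneg (hp0 x) 2
  have hp3 : (0:ℝ) ≤ p x ^ 3 := pow_nonneg (hp0 x) 3
  have hp4 : (0:ℝ) ≤ p x ^ 2 * p x ^ 2 := mul_nonneg hp2 hp2
  set q : Fin n × Fin n → Prop := fun e' => ({e'.1, e'.2} : Finset (Fin n)) = {e.1, e.2} with hq
  set r : Fin n × Fin n → Prop :=
    fun e' => Disjoint ({e.1, e.2} : Finset (Fin n)) {e'.1, e'.2} with hr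
  rw [← Finset.sum_filter_add_sum_filter_not E q]
  have bound1 : ∑ e' ∈ E.filter q, T e' ≤ 2 * p x ^ 2 := by
    have hsub : E.filter q ⊆ {e, (e.2, e.1)} := by
      intro e' h'
      rw [Finset.mem_filter] at h'
      have he'ne : e'.1 ≠ e'.2 := (Finset.mem_offDiag.1 h'.1).2.2
      rcases sameSet_cases he'ne h'.2 with h | h <;> simp [h]
    have hcard : (E.filter q).card ≤ 2 :=
      le_trans (Finset.card_le_card hsub)
        (le_trans (Finset.card_insert_le _ _) (by simp))
    have hterm : ∀ e' ∈ E.filter q, T e' ≤ p x ^ 2 := by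
      intro e' h'
      rw [Finset.mem_filter] at h'
      have he'ne : e'.1 ≠ e'.2 := (Finset.mem_offDiag.1 h'.1).2.2
      have hu : ({e.1, e.2} ∪ {e'.1, e'.2} : Finset (Fin n)) = {e.1, e.2} := by
        rw [h'.2, Finset.union_self]
      rw [hT]
      simp only
      rw [Ex_Y_mul_same p hp1 x he he'ne, hu, Finset.card_pair he]
      linarith
    calc ∑ e' ∈ E.filter q, T e' ≤ ∑ _e' ∈ E.filter q, p x ^ 2 := Finset.sum_le_sum hterm
      _ = (E.filter q).card * p x ^ 2 := by rw [Finset.sum_const, nsmul_eq_mul]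
      _ ≤ 2 * p x ^ 2 := by
          refine mul_le_mul_of_nonneg_right ?_ hp2
          exact_mod_cast hcard
  have bound2 : ∑ e' ∈ E.filter (fun e' => ¬ q e'), T e' ≤ (4 * n) * p x ^ 3 := by
    rw [← Finset.sum_filter_add_sum_filter_not (E.filter (fun e' => ¬ q e')) r]
    have hzero : ∑ e' ∈ (E.filter (fun e' => ¬ q e')).filter r, T e' = 0 := by
      refine Finset.sum_eq_zero fun e' h' => ?_
      rw [Finset.mem_filter] at h'
      have h'' := Finset.mem_filter.1 h'.1
      have he'ne : e'.1 ≠ e'.2 := (Finset.mem_offDiag.1 h''.1).2.2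
      rw [hT]
      simp only
      rw [Ex_Y_mul_disjoint p hp1 x x he he'ne h'.2, sub_self]
    have hbound : ∑ e' ∈ (E.filter (fun e' => ¬ q e')).filter (fun e' => ¬ r e'), T e'
        ≤ (4 * n) * p x ^ 3 := by
      set s2 := (E.filter (fun e' => ¬ q e')).filter (fun e' => ¬ r e') with hs2
      have hterm : ∀ e' ∈ s2, T e' ≤ p x ^ 3 := by
        intro e' h'
        rw [hs2, Finset.mem_filter, Finset.mem_filter] at h'
        have he'ne : e'.1 ≠ e'.2 := (Finset.mem_offDiag.1 h'.1.1).2.2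
        have hc3 : 3 ≤ (({e.1, e.2} ∪ {e'.1, e'.2} : Finset (Fin n))).card :=
          card_union_ge_three he he'ne h'.1.2
        have : Ex p n (fun ω => Y n x e ω * Y n x e' ω) ≤ p x ^ 3 := by
          rw [Ex_Y_mul_same p hp1 x he he'ne]
          exact pow_le_pow_of_le_one (hp0 x) hx1 hc3
        rw [hT]; simp only; linarith
      have hsub : s2 ⊆ (({e.1, e.2} : Finset (Fin n)) ×ˢ Finset.univ)
          ∪ (Finset.univ ×ˢ ({e.1, e.2} : Finset (Fin n))) := by
        intro e' h'
        rw [hs2, Finset.mem_filter, Finset.mem_filter] at h'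
        obtain ⟨m, hm1, hm2⟩ := Finset.not_disjoint_iff.1 h'.2
        simp only [Finset.mem_insert, Finset.mem_singleton] at hm2
        rw [Finset.mem_union, Finset.mem_product, Finset.mem_product]
        rcases hm2 with h | h
        · left; exact ⟨h ▸ hm1, Finset.mem_univ _⟩
        · right; exact ⟨Finset.mem_univ _, h ▸ hm1⟩
      have hcard : s2.card ≤ 4 * n := by
        refine le_trans (Finset.card_le_card hsub) (le_trans (Finset.card_union_le _ _) ?_)
        rw [Finset.card_product, Finset.card_product, Finset.card_pair he]
        simp only [Finset.card_univ, Fintype.card_fin]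
        omega
      calc ∑ e' ∈ s2, T e' ≤ ∑ _e' ∈ s2, p x ^ 3 := Finset.sum_le_sum hterm
        _ = s2.card * p x ^ 3 := by rw [Finset.sum_const, nsmul_eq_mul]
        _ ≤ (4 * n) * p x ^ 3 := by
            refine mul_le_mul_of_nonneg_right ?_ hp3
            exact_mod_cast hcard
    linarith
  linarith

lemma numeric_b {N q2 q3 : ℝ} (hN : 2 ≤ N) (hq2 : 0 ≤ q2) (hq3 : 0 ≤ q3) :
    ((N * (N - 1))⁻¹) ^ 2 * (2 * N ^ 2 * q2 + 4 * N ^ 3 * q3)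
      ≤ 16 * (q2 / N ^ 2 + q3 / N) := by
  have hN0 : (0:ℝ) < N := by linarith
  have hD : (0:ℝ) < N * (N - 1) := by nlinarith
  have hD2 : N ^ 2 / 2 ≤ N * (N - 1) := by nlinarith [mul_nonneg (by linarith : (0:ℝ) ≤ N) (by linarith : (0:ℝ) ≤ N - 2)]
  have h4 : N ^ 4 / 4 ≤ (N * (N - 1)) ^ 2 := by
    have := pow_le_pow_left₀ (by positivity : (0:ℝ) ≤ N ^ 2 / 2) hD2 2
    calc N ^ 4 / 4 = (N ^ 2 / 2) ^ 2 := by ring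
      _ ≤ (N * (N - 1)) ^ 2 := this
  have hinv : ((N * (N - 1))⁻¹) ^ 2 ≤ 4 / N ^ 4 := by
    rw [inv_pow]
    have h1 : (0:ℝ) < N ^ 4 / 4 := by positivity
    have := inv_anti₀ h1 h4
    rwa [inv_div] at this
  have hnn : (0:ℝ) ≤ 2 * N ^ 2 * q2 + 4 * N ^ 3 * q3 := by positivity
  have step1 : ((N * (N - 1))⁻¹) ^ 2 * (2 * N ^ 2 * q2 + 4 * N ^ 3 * q3)
      ≤ (4 / N ^ 4) * (2 * N ^ 2 * q2 + 4 * N ^ 3 * q3) :=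
    mul_le_mul_of_nonneg_right hinv hnn
  have heq : (4 / N ^ 4) * (2 * N ^ 2 * q2 + 4 * N ^ 3 * q3)
      = 8 * (q2 / N ^ 2) + 16 * (q3 / N) := by
    field_simp
    ring
  have hq2N : (0:ℝ) ≤ q2 / N ^ 2 := by positivity
  linarith

lemma sum_var_bound [MeasurableSpace α] [MeasurableSingletonClass α]
    (p : α → ℝ) (hp0 : ∀ x, 0 ≤ p x) (hp1 : ∑ x, p x = 1)
    {n : ℕ} (x : α) :
    ∑ e ∈ (Finset.univ : Finset (Fin n)).offDiag,
      ∑ e' ∈ (Finset.univ : Finset (Fin n)).offDiag,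
        (Ex p n (fun ω => Y n x e ω * Y n x e' ω) - p x ^ 2 * p x ^ 2)
      ≤ (n:ℝ) ^ 2 * (2 * p x ^ 2 + 4 * (n:ℝ) * p x ^ 3) := by
  have hx1 : p x ≤ 1 := hp1 ▸ Finset.single_le_sum (fun i _ => hp0 i) (Finset.mem_univ x)
  have hp2 : (0:ℝ) ≤ p x ^ 2 := pow_nonneg (hp0 x) 2
  have hp3 : (0:ℝ) ≤ p x ^ 3 := pow_nonneg (hp0 x) 3
  have hB : (0:ℝ) ≤ 2 * p x ^ 2 + 4 * (n:ℝ) * p x ^ 3 :=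
    add_nonneg (by linarith) (mul_nonneg (by positivity) hp3)
  have h1 : ∑ e ∈ (Finset.univ : Finset (Fin n)).offDiag,
      ∑ e' ∈ (Finset.univ : Finset (Fin n)).offDiag,
        (Ex p n (fun ω => Y n x e ω * Y n x e' ω) - p x ^ 2 * p x ^ 2)
      ≤ ∑ _e ∈ (Finset.univ : Finset (Fin n)).offDiag, (2 * p x ^ 2 + (4 * (n:ℝ)) * p x ^ 3) := by
    refine Finset.sum_le_sum fun e he => ?_
    exact inner_bound p hp0 hp1 x hx1 (Finset.mem_offDiag.1 he).2.2
  have hcard : (((Finset.univ : Finset (Fin n)).offDiag.card : ℝ)) ≤ (n:ℝ) ^ 2 := by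
    rw [Finset.offDiag_card]
    simp only [Finset.card_univ, Fintype.card_fin]
    calc ((n * n - n : ℕ) : ℝ) ≤ ((n * n : ℕ) : ℝ) := by exact_mod_cast Nat.sub_le _ _
      _ = (n:ℝ) ^ 2 := by push_cast; ring
  calc ∑ e ∈ (Finset.univ : Finset (Fin n)).offDiag,
      ∑ e' ∈ (Finset.univ : Finset (Fin n)).offDiag,
        (Ex p n (fun ω => Y n x e ω * Y n x e' ω) - p x ^ 2 * p x ^ 2)
      ≤ ∑ _e ∈ (Finset.univ : Finset (Fin n)).offDiag, (2 * p x ^ 2 + (4 * (n:ℝ)) * p x ^ 3) := h1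
    _ = ((Finset.univ : Finset (Fin n)).offDiag.card : ℝ) * (2 * p x ^ 2 + 4 * (n:ℝ) * p x ^ 3) := by
        rw [Finset.sum_const, nsmul_eq_mul]
    _ ≤ (n:ℝ) ^ 2 * (2 * p x ^ 2 + 4 * (n:ℝ) * p x ^ 3) :=
        mul_le_mul_of_nonneg_right hcard hB

end CollVar

open CollVar

/-- Variance bounds for bin contributions and for the collision estimator. -/
theorem collision_estimator_variance :
    ∃ C : ℝ, 0 < C ∧
      ∀ (α : Type) [Fintype α] [DecidableEq α] [MeasurableSpace α] [MeasurableSingletonClass α]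
        (p : α → ℝ), (∀ x, 0 ≤ p x) → (∑ x, p x = 1) →
      ∀ (μ : Measure α) [IsProbabilityMeasure μ], (∀ x, μ {x} = ENNReal.ofReal (p x)) →
      ∀ (n : ℕ), 2 ≤ n →
        (∀ x : α,
          variance (fun ω : Fin n → α => (binCount n x ω : ℝ) ^ 2 - (binCount n x ω : ℝ))
              (Measure.pi fun _ : Fin n => μ)
            ≤ C * (((n : ℝ) * p x) ^ 2 + ((n : ℝ) * p x) ^ 3)) ∧
        variance (fun ω : Fin n → α => collEst n ω) (Measure.pi fun _ : Fin n => μ)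
          ≤ C * ((∑ x, (p x) ^ 2) / (n : ℝ) ^ 2 + (∑ x, (p x) ^ 3) / (n : ℝ)) := by
  refine ⟨16, by norm_num, ?_⟩
  intro α _ _ _ _ p hp0 hp1 μ _ hμ n hn
  have hN : (2:ℝ) ≤ (n:ℝ) := by exact_mod_cast hn
  have hN0 : (0:ℝ) < (n:ℝ) := by linarith
  set E := (Finset.univ : Finset (Fin n)).offDiag with hE
  constructor
  · -- part (a)
    intro x
    have hfun : (fun ω : Fin n → α => (binCount n x ω : ℝ) ^ 2 - (binCount n x ω : ℝ))
        = fun ω => ∑ e ∈ E, Y n x e ω := funext fun ω => binCount_identity n x ω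
    rw [hfun, var_sum p hp0 μ hμ n E (fun e => Y n x e)]
    have hrw : ∀ e ∈ E, ∀ e' ∈ E,
        (Ex p n (fun ω => Y n x e ω * Y n x e' ω) - Ex p n (Y n x e) * Ex p n (Y n x e'))
          = (Ex p n (fun ω => Y n x e ω * Y n x e' ω) - p x ^ 2 * p x ^ 2) := by
      intro e he e' he'
      rw [Ex_Y p hp1 x (Finset.mem_offDiag.1 he).2.2, Ex_Y p hp1 x (Finset.mem_offDiag.1 he').2.2]
    have heq : ∑ e ∈ E, ∑ e' ∈ E,
        (Ex p n (fun ω => Y n x e ω * Y n x e' ω) - Ex p n (Y n x e) * Ex p n (Y n x e'))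
        = ∑ e ∈ E, ∑ e' ∈ E,
          (Ex p n (fun ω => Y n x e ω * Y n x e' ω) - p x ^ 2 * p x ^ 2) :=
      Finset.sum_congr rfl fun e he => Finset.sum_congr rfl fun e' he' => hrw e he e' he'
    rw [heq]
    have hb := sum_var_bound p hp0 hp1 (n := n) x
    have hpx : (0:ℝ) ≤ (n:ℝ) * p x := mul_nonneg hN0.le (hp0 x)
    have h2 : ((n:ℝ)) ^ 2 * (2 * p x ^ 2 + 4 * (n:ℝ) * p x ^ 3)
        = 2 * ((n:ℝ) * p x) ^ 2 + 4 * ((n:ℝ) * p x) ^ 3 := by ring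
    have h3 : (0:ℝ) ≤ ((n:ℝ) * p x) ^ 2 := sq_nonneg _
    have h4 : (0:ℝ) ≤ ((n:ℝ) * p x) ^ 3 := pow_nonneg hpx 3
    calc ∑ e ∈ E, ∑ e' ∈ E,
          (Ex p n (fun ω => Y n x e ω * Y n x e' ω) - p x ^ 2 * p x ^ 2)
        ≤ ((n:ℝ)) ^ 2 * (2 * p x ^ 2 + 4 * (n:ℝ) * p x ^ 3) := hb
      _ = 2 * ((n:ℝ) * p x) ^ 2 + 4 * ((n:ℝ) * p x) ^ 3 := h2
      _ ≤ 16 * (((n:ℝ) * p x) ^ 2 + ((n:ℝ) * p x) ^ 3) := by linarith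
  · -- part (b)
    set Z : (Fin n × Fin n) → (Fin n → α) → ℝ := fun e ω => ∑ x : α, Y n x e ω with hZ
    have hfun : (fun ω : Fin n → α => collEst n ω)
        = ((n:ℝ) * ((n:ℝ) - 1))⁻¹ • (fun ω => ∑ e ∈ E, Z e ω) := by
      funext ω
      show collEst n ω = ((n:ℝ) * ((n:ℝ) - 1))⁻¹ * ∑ e ∈ E, Z e ω
      unfold collEst
      rw [coll_card_identity n ω, div_eq_inv_mul]
    rw [hfun, variance_smul]
    -- bound on variance of the total pair count
    have hVtot : variance (fun ω => ∑ e ∈ E, Z e ω) (Measure.pi fun _ : Fin n => μ)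
        ≤ 2 * (n:ℝ) ^ 2 * (∑ x, p x ^ 2) + 4 * (n:ℝ) ^ 3 * (∑ x, p x ^ 3) := by
      rw [var_sum p hp0 μ hμ n E Z]
      -- pointwise expansion of each covariance term
      have hterm : ∀ e ∈ E, ∀ e' ∈ E,
          (Ex p n (fun ω => Z e ω * Z e' ω) - Ex p n (Z e) * Ex p n (Z e'))
            ≤ ∑ x : α, (Ex p n (fun ω => Y n x e ω * Y n x e' ω) - p x ^ 2 * p x ^ 2) := by
        intro e he e' he'
        have hene : e.1 ≠ e.2 := (Finset.mem_offDiag.1 he).2.2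
        have he'ne : e'.1 ≠ e'.2 := (Finset.mem_offDiag.1 he').2.2
        have hU : ∀ x y : α,
            Ex p n (fun ω => Y n x e ω * Y n y e' ω) - p x ^ 2 * p y ^ 2 ≤ 0 ∨ x = y := by
          intro x y
          by_cases hxy : x = y
          · right; exact hxy
          · left
            by_cases hd : Disjoint ({e.1, e.2} : Finset (Fin n)) {e'.1, e'.2}
            · rw [Ex_Y_mul_disjoint p hp1 x y hene he'ne hd, sub_self]
            · rw [Ex_congr (fun ω => Y_mul_cross hxy hd ω), Ex_zero]
              have : (0:ℝ) ≤ p x ^ 2 * p y ^ 2 :=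
                mul_nonneg (pow_nonneg (hp0 x) 2) (pow_nonneg (hp0 y) 2)
              linarith
        -- expand Ex of products of sums
        have hexp : Ex p n (fun ω => Z e ω * Z e' ω)
            = ∑ x : α, ∑ y : α, Ex p n (fun ω => Y n x e ω * Y n y e' ω) := by
          rw [Ex_congr (fun ω => Finset.sum_mul_sum Finset.univ Finset.univ
            (fun x => Y n x e ω) (fun y => Y n y e' ω))]
          rw [Ex_sum Finset.univ (fun x ω => ∑ y : α, Y n x e ω * Y n y e' ω)]
          exact Finset.sum_congr rfl fun x _ =>
            Ex_sum Finset.univ (fun y ω => Y n x e ω * Y n y e' ω)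
        have hZe : Ex p n (Z e) = ∑ x : α, p x ^ 2 := by
          rw [show Z e = fun ω => ∑ x : α, Y n x e ω from rfl,
            Ex_sum Finset.univ (fun x => Y n x e)]
          exact Finset.sum_congr rfl fun x _ => Ex_Y p hp1 x hene
        have hZe' : Ex p n (Z e') = ∑ y : α, p y ^ 2 := by
          rw [show Z e' = fun ω => ∑ x : α, Y n x e' ω from rfl,
            Ex_sum Finset.univ (fun x => Y n x e')]
          exact Finset.sum_congr rfl fun y _ => Ex_Y p hp1 y he'ne
        rw [hexp, hZe, hZe', Finset.sum_mul_sum, ← Finset.sum_sub_distrib]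
        have : ∀ x : α, (∑ y : α, Ex p n (fun ω => Y n x e ω * Y n y e' ω)) - ∑ y : α, p x ^ 2 * p y ^ 2
            ≤ Ex p n (fun ω => Y n x e ω * Y n x e' ω) - p x ^ 2 * p x ^ 2 := by
          intro x
          rw [← Finset.sum_sub_distrib]
          rw [← Finset.add_sum_erase _ _ (Finset.mem_univ x)]
          have hrest : ∑ y ∈ Finset.univ.erase x,
              (Ex p n (fun ω => Y n x e ω * Y n y e' ω) - p x ^ 2 * p y ^ 2) ≤ 0 := by
            refine Finset.sum_nonpos fun y hy => ?_
            have hxy : x ≠ y := fun h => (Finset.mem_erase.1 hy).1 h.symm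
            rcases hU x y with h | h
            · exact h
            · exact absurd h hxy
          linarith
        exact Finset.sum_le_sum fun x _ => this x
      -- sum the bound over all pairs, then swap sums
      have hswap : ∑ e ∈ E, ∑ e' ∈ E,
          (∑ x : α, (Ex p n (fun ω => Y n x e ω * Y n x e' ω) - p x ^ 2 * p x ^ 2))
          = ∑ x : α, ∑ e ∈ E, ∑ e' ∈ E,
            (Ex p n (fun ω => Y n x e ω * Y n x e' ω) - p x ^ 2 * p x ^ 2) := by
        rw [show (∑ e ∈ E, ∑ e' ∈ E,
          (∑ x : α, (Ex p n (fun ω => Y n x e ω * Y n x e' ω) - p x ^ 2 * p x ^ 2)))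
          = ∑ e ∈ E, ∑ x : α, ∑ e' ∈ E,
            (Ex p n (fun ω => Y n x e ω * Y n x e' ω) - p x ^ 2 * p x ^ 2) from
          Finset.sum_congr rfl fun e _ => Finset.sum_comm]
        exact Finset.sum_comm
      refine le_trans (Finset.sum_le_sum fun e he => Finset.sum_le_sum fun e' he' =>
        hterm e he e' he') ?_
      rw [hswap]
      refine le_trans (Finset.sum_le_sum fun x (_ : x ∈ Finset.univ) =>
        sum_var_bound p hp0 hp1 x) ?_
      refine le_of_eq ?_
      rw [Finset.mul_sum, Finset.mul_sum, ← Finset.sum_add_distrib]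
      exact Finset.sum_congr rfl fun x _ => by ring
    have hq2 : (0:ℝ) ≤ ∑ x, p x ^ 2 := Finset.sum_nonneg fun x _ => pow_nonneg (hp0 x) 2
    have hq3 : (0:ℝ) ≤ ∑ x, p x ^ 3 := Finset.sum_nonneg fun x _ => pow_nonneg (hp0 x) 3
    have hc2 : (0:ℝ) ≤ (((n:ℝ) * ((n:ℝ) - 1))⁻¹) ^ 2 := sq_nonneg _
    calc (((n:ℝ) * ((n:ℝ) - 1))⁻¹) ^ 2 * variance (fun ω => ∑ e ∈ E, Z e ω)
          (Measure.pi fun _ : Fin n => μ)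
        ≤ (((n:ℝ) * ((n:ℝ) - 1))⁻¹) ^ 2 *
            (2 * (n:ℝ) ^ 2 * (∑ x, p x ^ 2) + 4 * (n:ℝ) ^ 3 * (∑ x, p x ^ 3)) :=
          mul_le_mul_of_nonneg_left hVtot hc2
      _ ≤ 16 * ((∑ x, p x ^ 2) / (n:ℝ) ^ 2 + (∑ x, p x ^ 3) / (n:ℝ)) := numeric_b hN hq2 hq3
end

section
/- Let a, b > 0 and define g : (0,∞) → ℝ by g(ℓ) = a^ℓ · ℓ^(b−ℓ). Then there is a unique ℓ* > 0 satisfying b − ℓ* + ℓ*·log(a/ℓ*) = 0, and g is strictly increasing on (0, ℓ*] and strictly decreasing on [ℓ*, ∞); in particular g attains its maximum over (0,∞) at ℓ*. -/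
open Real Set

/-- Shape of the auxiliary function `g(ℓ) = a^ℓ · ℓ^(b−ℓ)`: unique critical point,
increasing before it, decreasing after it, and maximal there. -/
theorem aux_function_shape (a b : ℝ) (ha : 0 < a) (hb : 0 < b) :
    ∃ lstar : ℝ, 0 < lstar ∧
      (b - lstar + lstar * Real.log (a / lstar) = 0) ∧
      (∀ l : ℝ, 0 < l → b - l + l * Real.log (a / l) = 0 → l = lstar) ∧
      StrictMonoOn (fun l : ℝ => a ^ l * l ^ (b - l)) (Set.Ioc 0 lstar) ∧
      StrictAntiOn (fun l : ℝ => a ^ l * l ^ (b - l)) (Set.Ici lstar) ∧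
      (∀ l : ℝ, 0 < l → a ^ l * l ^ (b - l) ≤ a ^ lstar * lstar ^ (b - lstar)) := by
  set ψ : ℝ → ℝ := fun l => Real.log a - Real.log l + b / l - 1 with hψdef
  set h : ℝ → ℝ := fun l => l * Real.log a + (b - l) * Real.log l with hhdef
  -- ψ is strictly antitone on (0, ∞)
  have hψanti : StrictAntiOn ψ (Set.Ioi 0) := by
    intro x hx y hy hxy
    have h1 : Real.log x < Real.log y := Real.log_lt_log hx hxy
    have h2 : b / y < b / x := div_lt_div_of_pos_left hb hx hxy
    simp only [hψdef]
    linarith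
  -- relation between the critical equation and ψ
  have key : ∀ l : ℝ, 0 < l → b - l + l * Real.log (a / l) = l * ψ l := by
    intro l hl
    rw [Real.log_div ha.ne' hl.ne']
    simp only [hψdef]
    field_simp
    ring
  -- existence of a root of ψ via IVT
  set x0 : ℝ := min a b with hx0def
  set x1 : ℝ := max (a * Real.exp b) 1 with hx1def
  have hx0pos : 0 < x0 := lt_min ha hb
  have hx01 : x0 ≤ x1 := by
    have h1 : a ≤ a * Real.exp b := le_mul_of_one_le_right ha.le (Real.one_le_exp hb.le)
    exact le_trans (min_le_left a b) (le_trans h1 (le_max_left _ _))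
  have hψcont : ∀ x ∈ Set.Icc x0 x1, ContinuousAt ψ x := by
    intro x hx
    have hxpos : 0 < x := lt_of_lt_of_le hx0pos hx.1
    exact ((continuousAt_const.sub (Real.continuousAt_log hxpos.ne')).add
      (continuousAt_const.div continuousAt_id hxpos.ne')).sub continuousAt_const
  have hψx0 : 0 ≤ ψ x0 := by
    have h1 : Real.log x0 ≤ Real.log a := Real.log_le_log hx0pos (min_le_left a b)
    have h2 : 1 ≤ b / x0 := (one_le_div hx0pos).2 (min_le_right a b)
    simp only [hψdef]
    linarith
  have hψx1 : ψ x1 ≤ 0 := by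
    have hx1pos : 0 < x1 := lt_of_le_of_lt' (le_max_right _ 1) one_pos
    have h1 : Real.log a + b ≤ Real.log x1 := by
      have : Real.log (a * Real.exp b) ≤ Real.log x1 :=
        Real.log_le_log (by positivity) (le_max_left _ _)
      rwa [Real.log_mul ha.ne' (Real.exp_pos b).ne', Real.log_exp] at this
    have h2 : b / x1 ≤ b := div_le_self hb.le (le_max_right _ 1)
    simp only [hψdef]
    linarith
  have hivt : ∃ lstar ∈ Set.Icc x0 x1, ψ lstar = 0 := by
    have hc : ContinuousOn ψ (Set.Icc x0 x1) :=
      fun x hx => (hψcont x hx).continuousWithinAt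
    have := intermediate_value_Icc' hx01 hc
    have hmem : (0 : ℝ) ∈ Set.Icc (ψ x1) (ψ x0) := ⟨hψx1, hψx0⟩
    obtain ⟨l, hl, hl0⟩ := this hmem
    exact ⟨l, hl, hl0⟩
  obtain ⟨lstar, hlmem, hψzero⟩ := hivt
  have hlpos : 0 < lstar := lt_of_lt_of_le hx0pos hlmem.1
  -- derivative facts
  have hg_eq : ∀ l : ℝ, 0 < l → a ^ l * l ^ (b - l) = Real.exp (h l) := by
    intro l hl
    rw [Real.rpow_def_of_pos ha, Real.rpow_def_of_pos hl, ← Real.exp_add]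
    simp only [hhdef]
    ring_nf
  have hderiv : ∀ l : ℝ, 0 < l →
      HasDerivAt (fun l : ℝ => a ^ l * l ^ (b - l)) (Real.exp (h l) * ψ l) l := by
    intro l hl
    have h1 : HasDerivAt (fun l : ℝ => l * Real.log a) (Real.log a) l := by
      simpa using (hasDerivAt_id l).mul_const (Real.log a)
    have h2 : HasDerivAt (fun l : ℝ => (b - l) * Real.log l)
        ((-1) * Real.log l + (b - l) * l⁻¹) l := by
      exact (((hasDerivAt_const l b).sub (hasDerivAt_id' l)).mul (Real.hasDerivAt_log hl.ne')).congr_deriv (by simp only [Pi.sub_apply]; ring)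
    have h3 : HasDerivAt h (ψ l) l := by
      have : HasDerivAt (fun x : ℝ => x * Real.log a + (b - x) * Real.log x)
          (Real.log a + ((-1) * Real.log l + (b - l) * l⁻¹)) l := h1.add h2
      convert this using 1
      simp only [hψdef]
      field_simp
      ring
    have h4 : HasDerivAt (fun l => Real.exp (h l)) (Real.exp (h l) * ψ l) l := h3.exp
    refine h4.congr_of_eventuallyEq ?_
    filter_upwards [eventually_gt_nhds hl] with x hx
    exact hg_eq x hx
  have hderiv' : ∀ l : ℝ, 0 < l →
      deriv (fun l : ℝ => a ^ l * l ^ (b - l)) l = Real.exp (h l) * ψ l :=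
    fun l hl => (hderiv l hl).deriv
  -- sign of ψ away from lstar
  have hψpos : ∀ l : ℝ, 0 < l → l < lstar → 0 < ψ l := by
    intro l hl hllt
    have := hψanti hl (Set.mem_Ioi.mpr hlpos) hllt
    rwa [hψzero] at this
  have hψneg : ∀ l : ℝ, lstar < l → ψ l < 0 := by
    intro l hllt
    have := hψanti (Set.mem_Ioi.mpr hlpos) (Set.mem_Ioi.mpr (hlpos.trans hllt)) hllt
    rwa [hψzero] at this
  -- monotonicity
  have hmono : StrictMonoOn (fun l : ℝ => a ^ l * l ^ (b - l)) (Set.Ioc 0 lstar) := by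
    apply strictMonoOn_of_deriv_pos (convex_Ioc 0 lstar)
    · exact fun x hx => ((hderiv x hx.1).continuousAt).continuousWithinAt
    · intro x hx
      rw [interior_Ioc] at hx
      rw [hderiv' x hx.1]
      exact mul_pos (Real.exp_pos _) (hψpos x hx.1 hx.2)
  have hanti : StrictAntiOn (fun l : ℝ => a ^ l * l ^ (b - l)) (Set.Ici lstar) := by
    apply strictAntiOn_of_deriv_neg (convex_Ici lstar)
    · exact fun x hx => ((hderiv x (lt_of_lt_of_le hlpos hx)).continuousAt).continuousWithinAt
    · intro x hx
      rw [interior_Ici] at hx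
      rw [hderiv' x (hlpos.trans hx)]
      exact mul_neg_of_pos_of_neg (Real.exp_pos _) (hψneg x hx)
  refine ⟨lstar, hlpos, ?_, ?_, hmono, hanti, ?_⟩
  · rw [key lstar hlpos, hψzero, mul_zero]
  · intro l hl hl0
    rw [key l hl] at hl0
    have hψl : ψ l = 0 := by
      rcases mul_eq_zero.mp hl0 with h' | h'
      · exact absurd h' hl.ne'
      · exact h'
    exact hψanti.injOn (Set.mem_Ioi.mpr hl) (Set.mem_Ioi.mpr hlpos) (hψl.trans hψzero.symm)
  · intro l hl
    rcases lt_trichotomy l lstar with hlt | heq | hgt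
    · exact (hmono ⟨hl, hlt.le⟩ ⟨hlpos, le_refl _⟩ hlt).le
    · rw [heq]
    · exact (hanti (Set.self_mem_Ici) (Set.mem_Ici.mpr hgt.le) hgt).le
end

section
/- Let a > 0 and b ≥ 1, and define g(ℓ) = a^ℓ · ℓ^(b−ℓ) for ℓ > 0. Then sup{ g(ℓ) : 1 ≤ ℓ ≤ b } ≤ a · (max(a,b))^(b−1). -/
open Real Set

/-- Supremum of the auxiliary function `g(ℓ) = a^ℓ · ℓ^(b−ℓ)` over `[1, b]`. -/
theorem aux_function_sup (a b : ℝ) (ha : 0 < a) (hb : 1 ≤ b) :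
    ∀ l : ℝ, 1 ≤ l → l ≤ b → a ^ l * l ^ (b - l) ≤ a * (max a b) ^ (b - 1) := by
  intro l hl hlb
  have haM : a ≤ max a b := le_max_left a b
  have hbM : b ≤ max a b := le_max_right a b
  have hM0 : 0 < max a b := lt_of_lt_of_le ha haM
  have h1 : a ^ l = a * a ^ (l - 1) := by
    nth_rewrite 2 [← Real.rpow_one a]
    rw [← Real.rpow_add ha]; ring_nf
  have h2 : a ^ (l - 1) ≤ (max a b) ^ (l - 1) :=
    Real.rpow_le_rpow ha.le haM (by linarith)
  have h3 : l ^ (b - l) ≤ (max a b) ^ (b - l) :=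
    Real.rpow_le_rpow (by linarith) (hlb.trans hbM) (by linarith)
  calc a ^ l * l ^ (b - l) = a * (a ^ (l - 1) * l ^ (b - l)) := by rw [h1]; ring
    _ ≤ a * ((max a b) ^ (l - 1) * (max a b) ^ (b - l)) := by
        apply mul_le_mul_of_nonneg_left _ ha.le
        exact mul_le_mul h2 h3 (Real.rpow_nonneg (by linarith) _) (Real.rpow_nonneg hM0.le _)
    _ = a * (max a b) ^ (b - 1) := by
        rw [← Real.rpow_add hM0]; ring_nf
end
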